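/- arXiv:1708.05254 — 6 statements merged into one kernel-verified Lean document; each statement's English description precedes it below -/
import Mathlib

section
/- Let ‖·‖ be a norm on ℝ^d with closed balls B(x,r), let K : ℝ^d → [0,∞) be a symmetric kernel with tail function κ₁ with respect to ‖·‖, and let P be a λ^d-absolutely continuous probability measure on ℝ^d that is normal at some level ρ ≥ 0. If x ∈ ℝ^d and σ > 0 satisfy B(x, σ) ⊆ M_ρ, then for every δ > 0 we have h_{P,δ}(x) ≥ ρ − ρ·κ₁(σ/δ). -/
open MeasureTheory ENNReal

noncomputable section

/-- `N` is a norm on `ℝ^d`. -/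
structure IsNormOn (d : ℕ) (N : (Fin d → ℝ) → ℝ) : Prop where
  eq_zero_iff : ∀ x, N x = 0 ↔ x = 0
  smul : ∀ (a : ℝ) (x : Fin d → ℝ), N (a • x) = |a| * N x
  triangle : ∀ x y, N (x + y) ≤ N x + N y

variable {d : ℕ} {N : (Fin d → ℝ) → ℝ}

lemma IsNormOn.zero (hN : IsNormOn d N) : N 0 = 0 := (hN.eq_zero_iff 0).2 rfl

lemma IsNormOn.neg (hN : IsNormOn d N) (x : Fin d → ℝ) : N (-x) = N x := by
  have := hN.smul (-1) x; simpa using this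

lemma IsNormOn.nonneg (hN : IsNormOn d N) (x : Fin d → ℝ) : 0 ≤ N x := by
  have h := hN.triangle x (-x)
  rw [add_neg_cancel, hN.zero, hN.neg] at h
  linarith

lemma IsNormOn.sum_le (hN : IsNormOn d N) {ι : Type*} [DecidableEq ι] (s : Finset ι) (f : ι → (Fin d → ℝ)) :
    N (∑ i ∈ s, f i) ≤ ∑ i ∈ s, N (f i) := by
  induction s using Finset.induction with
  | empty => simp [hN.zero]
  | insert _ _ hi ih =>
      rw [Finset.sum_insert hi, Finset.sum_insert hi]
      exact (hN.triangle _ _).trans (by linarith)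

lemma IsNormOn.le_const_mul (hN : IsNormOn d N) (x : Fin d → ℝ) :
    N x ≤ (∑ i, N (Pi.single i 1)) * ‖x‖ := by
  have hx : x = ∑ i, (x i) • (Pi.single i 1 : Fin d → ℝ) := by
    funext j; simp [Pi.single_apply, Finset.sum_ite_eq', mul_comm]
  calc N x = N (∑ i, (x i) • (Pi.single i 1 : Fin d → ℝ)) := by rw [← hx]
    _ ≤ ∑ i, N ((x i) • (Pi.single i 1 : Fin d → ℝ)) := hN.sum_le _ _
    _ = ∑ i, |x i| * N (Pi.single i 1) := by simp [hN.smul]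
    _ ≤ ∑ i, ‖x‖ * N (Pi.single i 1) := by
        refine Finset.sum_le_sum fun i _ => ?_
        exact mul_le_mul_of_nonneg_right (norm_le_pi_norm x i) (hN.nonneg _)
    _ = (∑ i, N (Pi.single i 1)) * ‖x‖ := by rw [Finset.sum_mul]; exact Finset.sum_congr rfl fun i _ => mul_comm _ _

lemma IsNormOn.continuous (hN : IsNormOn d N) : Continuous N := by
  set C : ℝ := ∑ i, N (Pi.single i 1) with hC
  have hC0 : 0 ≤ C := Finset.sum_nonneg fun i _ => hN.nonneg _
  have key : ∀ a b : Fin d → ℝ, N a - N b ≤ C * ‖a - b‖ := by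
    intro a b
    have h1 : N a ≤ N b + N (a - b) := by
      have := hN.triangle b (a - b); simpa using this
    have := hN.le_const_mul (a - b)
    linarith
  refine (LipschitzWith.of_dist_le_mul (K := C.toNNReal) fun a b => ?_).continuous
  rw [Real.dist_eq, dist_eq_norm, Real.coe_toNNReal _ hC0]
  have h1 := key a b
  have h2 := key b a
  rw [← norm_neg, neg_sub] at h2
  exact abs_le.mpr ⟨by linarith, h1⟩

/-- A symmetric kernel on `ℝ^d`: a bounded measurable function `K : ℝ^d → [0,∞)` that is
strictly positive in a neighborhood of `0`, even, and integrates to `1` with respect to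
Lebesgue measure. -/
structure IsSymmKernel (d : ℕ) (K : (Fin d → ℝ) → ℝ) : Prop where
  measurable : Measurable K
  nonneg : ∀ x, 0 ≤ K x
  bddAbove : BddAbove (Set.range K)
  pos_near_zero : ∀ᶠ x in nhds (0 : Fin d → ℝ), 0 < K x
  symm : ∀ x, K (-x) = K x
  integral_one : ∫ x, K x = 1

/-- The tail function `κ₁(r) := ∫_{ℝ^d ∖ B(0,r)} K dλ^d` of a kernel `K`, with respect to
the norm `N`. -/
def kappaOne (d : ℕ) (N K : (Fin d → ℝ) → ℝ) (r : ℝ) : ℝ :=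
  ∫ x in {x : Fin d → ℝ | r < N x}, K x

/-- The tail function `κ∞(r) := sup_{x ∈ ℝ^d ∖ B(0,r)} K x` of a kernel `K`, with respect
to the norm `N`. -/
def kappaInf (d : ℕ) (N K : (Fin d → ℝ) → ℝ) (r : ℝ) : ℝ :=
  sSup (K '' {x : Fin d → ℝ | r < N x})

/-- The infinite-sample kernel density estimator
`h_{P,δ}(x) := δ^{−d} ∫ K((x−y)/δ) dP(y)`. -/
def kdeP (d : ℕ) (K : (Fin d → ℝ) → ℝ) (δ : ℝ) (P : Measure (Fin d → ℝ))
    (x : Fin d → ℝ) : ℝ :=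
  (δ ^ d)⁻¹ * ∫ y, K (δ⁻¹ • (x - y)) ∂P

/-- `h` is a Lebesgue density of the measure `P` on `ℝ^d`. -/
def IsDensityOf (d : ℕ) (P : Measure (Fin d → ℝ)) (h : (Fin d → ℝ) → ℝ) : Prop :=
  Measurable h ∧ (∀ x, 0 ≤ h x) ∧ P = volume.withDensity fun x => ENNReal.ofReal (h x)

/-- `M_ρ`: the support of the measure `A ↦ λ^d(A ∩ {h ≥ ρ})`, i.e. the set of points all
of whose open neighborhoods intersect `{h ≥ ρ}` in a set of positive Lebesgue measure. -/
def Mset (d : ℕ) (h : (Fin d → ℝ) → ℝ) (ρ : ℝ) : Set (Fin d → ℝ) :=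
  {x | ∀ U : Set (Fin d → ℝ), IsOpen U → x ∈ U → 0 < volume (U ∩ {y | ρ ≤ h y})}

/-- `P` (with density `h`) is normal at level `ρ`: there are densities `h₁, h₂` of `P` with
`λ^d(M_ρ ∖ {h₁ ≥ ρ}) = 0` and `λ^d({h₂ > ρ} ∖ int M_ρ) = 0`. -/
def NormalAtLevel (d : ℕ) (P : Measure (Fin d → ℝ)) (h : (Fin d → ℝ) → ℝ) (ρ : ℝ) : Prop :=
  ∃ h₁ h₂, IsDensityOf d P h₁ ∧ IsDensityOf d P h₂ ∧
    volume (Mset d h ρ \ {x | ρ ≤ h₁ x}) = 0 ∧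
    volume ({x | ρ < h₂ x} \ interior (Mset d h ρ)) = 0

/-- Let `‖·‖` be a norm on `ℝ^d` with closed balls `B(x,r)`, `K` a
symmetric kernel with tail function `κ₁`, and `P` a Lebesgue-absolutely continuous
probability measure on `ℝ^d` that is normal at level `ρ ≥ 0`.  If `B(x,σ) ⊆ M_ρ` for some
`x ∈ ℝ^d`, `σ > 0`, then for every `δ > 0` we have `h_{P,δ}(x) ≥ ρ − ρ·κ₁(σ/δ)`. -/
theorem kdeP_lower_bound_of_ball_subset {d : ℕ} (hd : 0 < d)
    (N : (Fin d → ℝ) → ℝ) (hN : IsNormOn d N)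
    (K : (Fin d → ℝ) → ℝ) (hK : IsSymmKernel d K)
    (P : Measure (Fin d → ℝ)) [IsProbabilityMeasure P]
    (h : (Fin d → ℝ) → ℝ) (hdens : IsDensityOf d P h)
    (ρ : ℝ) (hρ : 0 ≤ ρ) (hnormal : NormalAtLevel d P h ρ)
    (x : Fin d → ℝ) (σ : ℝ) (hσ : 0 < σ)
    (hball : {y : Fin d → ℝ | N (y - x) ≤ σ} ⊆ Mset d h ρ)
    (δ : ℝ) (hδ : 0 < δ) :
    ρ - ρ * kappaOne d N K (σ / δ) ≤ kdeP d K δ P x := by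
  obtain ⟨h₁, h₂, ⟨h₁meas, h₁nn, hPeq⟩, -, hnull, -⟩ := hnormal
  set r : ℝ := σ / δ with hr
  have hδd : (0:ℝ) < δ ^ d := pow_pos hδ d
  have hSmeas : MeasurableSet {z : Fin d → ℝ | N z ≤ r} :=
    measurableSet_le hN.continuous.measurable measurable_const
  have intK : Integrable K := by
    by_contra hcon
    have := hK.integral_one
    rw [integral_undef hcon] at this
    exact one_ne_zero this.symm
  set g : (Fin d → ℝ) → ℝ := ({z : Fin d → ℝ | N z ≤ r}).indicator K with hg
  have intg : Integrable g := intK.indicator hSmeas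
  have hgval : (∫ z, g z) = 1 - kappaOne d N K r := by
    have hcompl : {z : Fin d → ℝ | N z ≤ r}ᶜ = {z | r < N z} := by ext z; simp [not_le]
    have hsplit := integral_add_compl hSmeas intK
    rw [hK.integral_one, hcompl] at hsplit
    rw [hg, integral_indicator hSmeas]
    unfold kappaOne
    linarith
  have hP : (∫ y, K (δ⁻¹ • (x - y)) ∂P) = ∫ y, h₁ y * K (δ⁻¹ • (x - y)) := by
    rw [hPeq]
    have he : (fun x => ENNReal.ofReal (h₁ x)) = fun x => ((h₁ x).toNNReal : ℝ≥0∞) := rfl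
    rw [he, integral_withDensity_eq_integral_smul h₁meas.real_toNNReal]
    congr 1; funext y
    simp [NNReal.smul_def, Real.coe_toNNReal _ (h₁nn y)]
  obtain ⟨M, hM⟩ := hK.bddAbove
  have hMle : ∀ z, K z ≤ M := fun z => hM (Set.mem_range_self z)
  have inth₁ : Integrable h₁ := by
    refine ⟨h₁meas.aestronglyMeasurable, ?_⟩
    rw [hasFiniteIntegral_iff_ofReal (Filter.Eventually.of_forall h₁nn)]
    have hv : (∫⁻ y, ENNReal.ofReal (h₁ y)) = P Set.univ := by
      rw [hPeq, withDensity_apply _ MeasurableSet.univ, Measure.restrict_univ]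
    rw [hv, measure_univ]
    exact one_lt_top
  have hmeasint : Measurable fun y : Fin d → ℝ => K (δ⁻¹ • (x - y)) :=
    hK.measurable.comp ((measurable_const.sub measurable_id).const_smul δ⁻¹)
  have intLHS : Integrable (fun y => h₁ y * K (δ⁻¹ • (x - y))) := by
    refine Integrable.mono' (inth₁.const_mul M) ?_ ?_
    · exact (h₁meas.mul hmeasint).aestronglyMeasurable
    · refine Filter.Eventually.of_forall fun y => ?_
      rw [Real.norm_eq_abs, abs_of_nonneg (mul_nonneg (h₁nn y) (hK.nonneg _)), mul_comm M]
      exact mul_le_mul_of_nonneg_left (hMle _) (h₁nn y)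
  have hδinv : (δ:ℝ)⁻¹ ≠ 0 := inv_ne_zero hδ.ne'
  have intg' : Integrable (fun z => g (δ⁻¹ • z)) :=
    (integrable_comp_smul_iff volume g hδinv).2 intg
  have intRHS : Integrable (fun y => ρ * g (δ⁻¹ • (x - y))) :=
    (intg'.comp_sub_left x).const_mul ρ
  have hae : ∀ᵐ y, ρ * g (δ⁻¹ • (x - y)) ≤ h₁ y * K (δ⁻¹ • (x - y)) := by
    have hnull' : ∀ᵐ y, y ∉ (Mset d h ρ \ {x | ρ ≤ h₁ x}) :=
      measure_eq_zero_iff_ae_notMem.mp hnull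
    filter_upwards [hnull'] with y hy
    by_cases hmem : δ⁻¹ • (x - y) ∈ {z : Fin d → ℝ | N z ≤ r}
    · have hmem' : N (δ⁻¹ • (x - y)) ≤ r := hmem
      rw [hN.smul, abs_of_pos (inv_pos.2 hδ)] at hmem'
      have hNxy : N (y - x) ≤ σ := by
        have : N (y - x) = N (x - y) := by rw [← neg_sub x y, hN.neg]
        rw [this]
        rw [hr, div_eq_inv_mul] at hmem'
        exact (mul_le_mul_iff_right₀ (inv_pos.2 hδ)).1 hmem'
      have hy' : ρ ≤ h₁ y := by
        by_contra hlt
        exact hy ⟨hball hNxy, hlt⟩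
      rw [hg, Set.indicator_of_mem hmem]
      exact mul_le_mul_of_nonneg_right hy' (hK.nonneg _) |>.trans_eq rfl |>.trans
        (le_of_eq rfl)
    · rw [hg, Set.indicator_of_notMem hmem, mul_zero]
      exact mul_nonneg (h₁nn y) (hK.nonneg _)
  have hmono := integral_mono_ae intRHS intLHS hae
  have hchg : (∫ y, g (δ⁻¹ • (x - y))) = δ ^ d * ∫ z, g z := by
    calc (∫ y, g (δ⁻¹ • (x - y)))
        = ∫ y, (fun z => g (δ⁻¹ • (x + z))) (-y) := by simp only [sub_eq_add_neg]
      _ = ∫ y, g (δ⁻¹ • (x + y)) := by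
          simpa using integral_neg_eq_self (fun z => g (δ⁻¹ • (x + z))) volume
      _ = ∫ z, g (δ⁻¹ • z) := integral_add_left_eq_self (fun z => g (δ⁻¹ • z)) x
      _ = |((δ⁻¹) ^ (Module.finrank ℝ (Fin d → ℝ)))⁻¹| • ∫ z, g z :=
          Measure.integral_comp_smul volume g δ⁻¹
      _ = δ ^ d * ∫ z, g z := by
          rw [Module.finrank_fin_fun, smul_eq_mul, inv_pow, inv_inv,
            abs_of_pos hδd]
  have hkey : ρ * (δ ^ d * (1 - kappaOne d N K r)) ≤ ∫ y, h₁ y * K (δ⁻¹ • (x - y)) := by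
    calc ρ * (δ ^ d * (1 - kappaOne d N K r))
        = ρ * ∫ y, g (δ⁻¹ • (x - y)) := by rw [hchg, hgval]
      _ = ∫ y, ρ * g (δ⁻¹ • (x - y)) := (integral_const_mul ρ _).symm
      _ ≤ _ := hmono
  unfold kdeP
  rw [hP]
  calc ρ - ρ * kappaOne d N K r
      = (δ ^ d)⁻¹ * (ρ * (δ ^ d * (1 - kappaOne d N K r))) := by field_simp
    _ ≤ (δ ^ d)⁻¹ * ∫ y, h₁ y * K (δ⁻¹ • (x - y)) :=
        mul_le_mul_of_nonneg_left hkey (inv_nonneg.2 hδd.le)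
end
end

section
/- Let ‖·‖ be a norm on ℝ^d with closed balls B(x,r), let K : ℝ^d → [0,∞) be a symmetric kernel with tail function κ₁ with respect to ‖·‖, and let P be a λ^d-absolutely continuous probability measure on ℝ^d that has a bounded Lebesgue density h and is normal at level ρ. Then for every δ > 0: (i) if 0 ≤ ρ ≤ ‖h‖_∞ and B(x, σ) ⊆ M_ρ for some x ∈ ℝ^d and σ > 0, then h_{P,δ}(x) ≥ ρ − κ₁(σ/δ)·‖h‖_∞; (ii) if ρ ≥ 0 and B(x, σ) ⊆ ℝ^d ∖ M_ρ for some x ∈ ℝ^d and σ > 0, then h_{P,δ}(x) < ρ + κ₁(σ/δ)·‖h‖_∞. Here ‖h‖_∞ denotes the essential supremum of h. -/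
open MeasureTheory ENNReal

noncomputable section

namespace KdeAux

variable {d : ℕ} {N K : (Fin d → ℝ) → ℝ}

lemma norm_zero (hN : IsNormOn d N) : N 0 = 0 := (hN.eq_zero_iff 0).2 rfl

lemma norm_neg (hN : IsNormOn d N) (x : Fin d → ℝ) : N (-x) = N x := by
  have := hN.smul (-1) x; simpa using this

lemma norm_nonneg' (hN : IsNormOn d N) (x : Fin d → ℝ) : 0 ≤ N x := by
  have h1 := hN.triangle x (-x)
  rw [add_neg_cancel, norm_zero hN, norm_neg hN] at h1
  linarith

lemma norm_le_const (hN : IsNormOn d N) : ∃ C : ℝ, 0 ≤ C ∧ ∀ x, N x ≤ C * ‖x‖ := by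
  classical
  refine ⟨∑ i, N (fun j => if i = j then 1 else 0),
    Finset.sum_nonneg fun i _ => norm_nonneg' hN _, fun x => ?_⟩
  calc N x = N (∑ i, x i • fun j => if i = j then (1:ℝ) else 0) := by
        rw [← pi_eq_sum_univ x]
    _ ≤ ∑ i, N (x i • fun j => if i = j then (1:ℝ) else 0) :=
        Finset.le_sum_of_subadditive N (norm_zero hN).le hN.triangle _ _
    _ = ∑ i, |x i| * N (fun j => if i = j then (1:ℝ) else 0) := by
        simp only [hN.smul]
    _ ≤ ∑ i, ‖x‖ * N (fun j => if i = j then (1:ℝ) else 0) := by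
        refine Finset.sum_le_sum fun i _ => ?_
        exact mul_le_mul_of_nonneg_right
          (by simpa [Real.norm_eq_abs] using norm_le_pi_norm x i) (norm_nonneg' hN _)
    _ = (∑ i, N (fun j => if i = j then (1:ℝ) else 0)) * ‖x‖ := by
        rw [Finset.sum_mul]; exact Finset.sum_congr rfl fun i _ => mul_comm _ _

lemma norm_continuous (hN : IsNormOn d N) : Continuous N := by
  obtain ⟨C, hC0, hC⟩ := norm_le_const hN
  have key : ∀ a b : Fin d → ℝ, N a - N b ≤ C * ‖a - b‖ := by
    intro a b
    have h1 := hN.triangle (a - b) b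
    rw [sub_add_cancel] at h1
    have := hC (a - b)
    linarith
  have lip : LipschitzWith (Real.toNNReal C) N := by
    apply LipschitzWith.of_dist_le_mul
    intro a b
    rw [Real.dist_eq, dist_eq_norm, Real.coe_toNNReal _ hC0, abs_le]
    constructor
    · have := key b a; rw [norm_sub_rev] at this; linarith
    · exact key a b
  exact lip.continuous

lemma kernel_integrable (hK : IsSymmKernel d K) : Integrable K volume := by
  by_contra hc
  have h1 := hK.integral_one
  rw [integral_undef hc] at h1
  norm_num at h1

lemma integral_comp_shift_smul (g : (Fin d → ℝ) → ℝ) {δ : ℝ} (hδ : 0 < δ) (x : Fin d → ℝ) :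
    ∫ y, g (δ⁻¹ • (x - y)) = δ ^ d * ∫ z, g z := by
  have h1 : ∫ y, g (δ⁻¹ • (x - y)) = ∫ w, g (δ⁻¹ • w) :=
    integral_sub_left_eq_self (fun w => g (δ⁻¹ • w)) volume x
  rw [h1, Measure.integral_comp_inv_smul_of_nonneg volume g hδ.le]
  simp [Module.finrank_fin_fun, smul_eq_mul]

lemma integrable_comp_shift_smul {g : (Fin d → ℝ) → ℝ} (hg : Integrable g volume)
    {δ : ℝ} (hδ : δ ≠ 0) (x : Fin d → ℝ) :
    Integrable (fun y => g (δ⁻¹ • (x - y))) volume := by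
  have h2 : Integrable (fun w => g (δ⁻¹ • w)) volume :=
    (MeasureTheory.integrable_comp_smul_iff volume g (inv_ne_zero hδ)).2 hg
  exact h2.comp_sub_left x

lemma W_integrable (hK : IsSymmKernel d K) {δ : ℝ} (hδ : 0 < δ) (x : Fin d → ℝ) :
    Integrable (fun y => K (δ⁻¹ • (x - y))) volume :=
  integrable_comp_shift_smul (kernel_integrable hK) hδ.ne' x

lemma kappaOne_nonneg (hK : IsSymmKernel d K) (r : ℝ) : 0 ≤ kappaOne d N K r :=
  integral_nonneg fun z => hK.nonneg z

lemma total_integral (hK : IsSymmKernel d K) {δ : ℝ} (hδ : 0 < δ) (x : Fin d → ℝ) :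
    ∫ y, K (δ⁻¹ • (x - y)) = δ ^ d := by
  rw [integral_comp_shift_smul K hδ x, hK.integral_one, mul_one]

lemma ball_measurable (hN : IsNormOn d N) (x : Fin d → ℝ) (σ : ℝ) :
    MeasurableSet {y : Fin d → ℝ | N (y - x) ≤ σ} := by
  have : Continuous fun y : Fin d → ℝ => N (y - x) :=
    (norm_continuous hN).comp (continuous_id.sub continuous_const)
  exact (isClosed_le this continuous_const).measurableSet

lemma tail_mem_iff (hN : IsNormOn d N) {δ σ : ℝ} (hδ : 0 < δ) (x y : Fin d → ℝ) :
    σ / δ < N (δ⁻¹ • (x - y)) ↔ σ < N (y - x) := by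
  have hxy : N (x - y) = N (y - x) := by rw [← norm_neg hN (y - x), neg_sub]
  rw [hN.smul, abs_of_pos (inv_pos.2 hδ), hxy, inv_mul_eq_div]
  exact div_lt_div_iff_of_pos_right hδ

lemma tail_integral (hN : IsNormOn d N) (hK : IsSymmKernel d K) {δ σ : ℝ} (hδ : 0 < δ)
    (x : Fin d → ℝ) :
    ∫ y in {y : Fin d → ℝ | N (y - x) ≤ σ}ᶜ, K (δ⁻¹ • (x - y))
      = δ ^ d * kappaOne d N K (σ / δ) := by
  have hopen : IsOpen {z : Fin d → ℝ | σ / δ < N z} :=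
    isOpen_lt continuous_const (norm_continuous hN)
  have hBc : MeasurableSet ({y : Fin d → ℝ | N (y - x) ≤ σ}ᶜ) :=
    (ball_measurable hN x σ).compl
  have hmem : ∀ y : Fin d → ℝ,
      (δ⁻¹ • (x - y)) ∈ {z : Fin d → ℝ | σ / δ < N z}
        ↔ y ∈ {y : Fin d → ℝ | N (y - x) ≤ σ}ᶜ := by
    intro y
    simp only [Set.mem_setOf_eq, Set.mem_compl_iff, not_le]
    exact tail_mem_iff hN hδ x y
  calc ∫ y in {y : Fin d → ℝ | N (y - x) ≤ σ}ᶜ, K (δ⁻¹ • (x - y))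
      = ∫ y, Set.indicator ({y : Fin d → ℝ | N (y - x) ≤ σ}ᶜ)
          (fun y => K (δ⁻¹ • (x - y))) y := (integral_indicator hBc).symm
    _ = ∫ y, Set.indicator {z : Fin d → ℝ | σ / δ < N z} K (δ⁻¹ • (x - y)) := by
        congr 1; funext y
        by_cases hy : y ∈ ({y : Fin d → ℝ | N (y - x) ≤ σ}ᶜ)
        · rw [Set.indicator_of_mem hy, Set.indicator_of_mem ((hmem y).2 hy)]
        · rw [Set.indicator_of_notMem hy,
            Set.indicator_of_notMem (fun hc => hy ((hmem y).1 hc))]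
    _ = δ ^ d * ∫ z, Set.indicator {z : Fin d → ℝ | σ / δ < N z} K z :=
        integral_comp_shift_smul _ hδ x
    _ = δ ^ d * kappaOne d N K (σ / δ) := by
        rw [integral_indicator hopen.measurableSet]; rfl

lemma ball_integral (hN : IsNormOn d N) (hK : IsSymmKernel d K) {δ σ : ℝ} (hδ : 0 < δ)
    (x : Fin d → ℝ) :
    ∫ y in {y : Fin d → ℝ | N (y - x) ≤ σ}, K (δ⁻¹ • (x - y))
      = δ ^ d - δ ^ d * kappaOne d N K (σ / δ) := by
  have h1 := integral_add_compl (ball_measurable hN x σ)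
    (W_integrable hK hδ x)
  have h2 := tail_integral hN hK hδ x (σ := σ)
  have h3 := total_integral hK hδ x
  linarith

lemma density_integrable {P : Measure (Fin d → ℝ)} [IsProbabilityMeasure P]
    {h : (Fin d → ℝ) → ℝ} (hmeas : Measurable h) (hnn : ∀ x, 0 ≤ h x)
    (hPdef : P = volume.withDensity fun x => ENNReal.ofReal (h x)) :
    Integrable h volume := by
  have hlint : ∫⁻ y, ENNReal.ofReal (h y) = 1 := by
    have h1 : P Set.univ = 1 := measure_univ
    rw [hPdef, withDensity_apply _ MeasurableSet.univ, Measure.restrict_univ] at h1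
    exact h1
  refine ⟨hmeas.aestronglyMeasurable, ?_⟩
  have e : ∀ y, (‖h y‖₊ : ℝ≥0∞) = ENNReal.ofReal (h y) := fun y =>
    Real.enorm_eq_ofReal (hnn y)
  show (∫⁻ a, (‖h a‖₊ : ℝ≥0∞) ∂volume) < ⊤
  simp_rw [e, hlint]
  exact one_lt_top

lemma kdeP_eq {h : (Fin d → ℝ) → ℝ} (hmeas : Measurable h) (hnn : ∀ x, 0 ≤ h x)
    {P : Measure (Fin d → ℝ)}
    (hPdef : P = volume.withDensity fun x => ENNReal.ofReal (h x))
    (K : (Fin d → ℝ) → ℝ) (δ : ℝ) (x : Fin d → ℝ) :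
    kdeP d K δ P x = (δ ^ d)⁻¹ * ∫ y, K (δ⁻¹ • (x - y)) * h y := by
  unfold kdeP
  congr 1
  rw [hPdef]
  have h2 := integral_withDensity_eq_integral_smul (μ := (volume : Measure (Fin d → ℝ)))
    (f := fun z => Real.toNNReal (h z)) hmeas.real_toNNReal (fun y => K (δ⁻¹ • (x - y)))
  have heq : (volume.withDensity fun z => ENNReal.ofReal (h z))
      = volume.withDensity fun z => ((Real.toNNReal (h z) : NNReal) : ℝ≥0∞) := rfl
  rw [heq, h2]
  congr 1; funext y
  simp [NNReal.smul_def, Real.coe_toNNReal _ (hnn y), mul_comm]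

end KdeAux

/-- Let `‖·‖` be a norm on `ℝ^d`, `K` a symmetric kernel with tail
function `κ₁`, and `P` a Lebesgue-absolutely continuous probability measure on `ℝ^d` with
bounded Lebesgue density `h` that is normal at level `ρ ≥ 0`.  Then for every `δ > 0`:
(i) if `ρ ≤ ‖h‖_∞` and `B(x,σ) ⊆ M_ρ` for some `x`, `σ > 0`, then
`h_{P,δ}(x) ≥ ρ − κ₁(σ/δ)·‖h‖_∞`; (ii) if `B(x,σ) ⊆ ℝ^d ∖ M_ρ` for some `x`, `σ > 0`,
then `h_{P,δ}(x) < ρ + κ₁(σ/δ)·‖h‖_∞`.  Here `‖h‖_∞` is the essential supremum of `h`. -/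
theorem kdeP_bounds_of_bounded_density {d : ℕ} (hd : 0 < d)
    (N : (Fin d → ℝ) → ℝ) (hN : IsNormOn d N)
    (K : (Fin d → ℝ) → ℝ) (hK : IsSymmKernel d K)
    (P : Measure (Fin d → ℝ)) [IsProbabilityMeasure P]
    (h : (Fin d → ℝ) → ℝ) (hdens : IsDensityOf d P h)
    (hbdd : ∃ C : ℝ, ∀ᵐ x ∂(volume : Measure (Fin d → ℝ)), h x ≤ C)
    (ρ : ℝ) (hρ : 0 ≤ ρ) (hnormal : NormalAtLevel d P h ρ)
    (δ : ℝ) (hδ : 0 < δ) :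
    (ρ ≤ essSup h volume →
      ∀ (x : Fin d → ℝ) (σ : ℝ), 0 < σ →
        {y : Fin d → ℝ | N (y - x) ≤ σ} ⊆ Mset d h ρ →
          ρ - kappaOne d N K (σ / δ) * essSup h volume ≤ kdeP d K δ P x) ∧
    (∀ (x : Fin d → ℝ) (σ : ℝ), 0 < σ →
      {y : Fin d → ℝ | N (y - x) ≤ σ} ⊆ (Mset d h ρ)ᶜ →
        kdeP d K δ P x < ρ + kappaOne d N K (σ / δ) * essSup h volume) := by
  classical
  obtain ⟨hmeas, hnn, hPdef⟩ := hdens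
  set M := essSup h volume with hMdef
  have hinth : Integrable h volume := KdeAux.density_integrable hmeas hnn hPdef
  obtain ⟨C, hC⟩ := hbdd
  have hbU : Filter.IsBoundedUnder (· ≤ ·) (ae (volume : Measure (Fin d → ℝ))) h :=
    ⟨C, Filter.eventually_map.2 hC⟩
  have hhM : ∀ᵐ y ∂(volume : Measure (Fin d → ℝ)), h y ≤ M := ae_le_essSup hbU
  have hvolpos : (0:ℝ≥0∞) < volume (Set.univ : Set (Fin d → ℝ)) :=
    isOpen_univ.measure_pos volume Set.univ_nonempty
  have hae_nebot : (ae (volume : Measure (Fin d → ℝ))).NeBot := by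
    refine ae_neBot.2 fun h0 => ?_
    rw [h0] at hvolpos
    simp at hvolpos
  have hM0 : 0 ≤ M := by
    obtain ⟨y, hy⟩ := hhM.exists
    exact (hnn y).trans hy
  have hD : (0:ℝ) < δ ^ d := pow_pos hδ d
  have hWm : ∀ x : Fin d → ℝ, Measurable fun y : Fin d → ℝ => K (δ⁻¹ • (x - y)) :=
    fun x => hK.measurable.comp
      (((continuous_const.sub continuous_id).const_smul δ⁻¹).measurable)
  obtain ⟨CK, hCK⟩ : ∃ CK : ℝ, ∀ z, K z ≤ CK := by
    obtain ⟨c, hc⟩ := hK.bddAbove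
    exact ⟨c, fun z => hc ⟨z, rfl⟩⟩
  have hfint : ∀ x : Fin d → ℝ,
      Integrable (fun y => K (δ⁻¹ • (x - y)) * h y) volume := fun x =>
    hinth.bdd_mul (hWm x).aestronglyMeasurable
      (c := CK) (Filter.Eventually.of_forall fun y => by
        rw [Real.norm_eq_abs, abs_of_nonneg (hK.nonneg _)]; exact hCK _)
  have hfnn : ∀ (x : Fin d → ℝ) (y : Fin d → ℝ), 0 ≤ K (δ⁻¹ • (x - y)) * h y :=
    fun x y => mul_nonneg (hK.nonneg _) (hnn y)
  constructor
  · -- part (i)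
    intro hρM x σ hσ hsub
    set B := {y : Fin d → ℝ | N (y - x) ≤ σ} with hBdef
    set κ := kappaOne d N K (σ / δ) with hκdef
    have hκ0 : 0 ≤ κ := KdeAux.kappaOne_nonneg hK _
    have hBmeas : MeasurableSet B := KdeAux.ball_measurable hN x σ
    have hWint := KdeAux.W_integrable hK hδ x
    have hCB : ∫ y in B, K (δ⁻¹ • (x - y)) = δ ^ d - δ ^ d * κ :=
      KdeAux.ball_integral hN hK hδ x
    -- a.e. lower bound on B
    obtain ⟨h₁, h₂, hd1, hd2, hnull1, hnull2⟩ := hnormal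
    obtain ⟨hmeas1, hnn1, hPdef1⟩ := hd1
    have hh1 : (fun y => h y) =ᵐ[(volume : Measure (Fin d → ℝ))] h₁ := by
      have hwd : volume.withDensity (fun z => ENNReal.ofReal (h z))
          = volume.withDensity fun z => ENNReal.ofReal (h₁ z) := by
        rw [← hPdef, ← hPdef1]
      have := (withDensity_eq_iff_of_sigmaFinite
        (hmeas.ennreal_ofReal.aemeasurable) (hmeas1.ennreal_ofReal.aemeasurable)).1 hwd
      filter_upwards [this] with y hy
      exact (ENNReal.ofReal_eq_ofReal_iff (hnn y) (hnn1 y)).1 hy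
    have hnm : ∀ᵐ y ∂(volume : Measure (Fin d → ℝ)),
        y ∉ (Mset d h ρ \ {z | ρ ≤ h₁ z}) := by
      rw [ae_iff]
      simp only [not_not]
      exact hnull1
    have haeB : ∀ᵐ y ∂(volume.restrict B), ρ ≤ h y := by
      rw [ae_restrict_iff' hBmeas]
      filter_upwards [hnm, hh1] with y hy1 hy2 hyB
      have hyM : y ∈ Mset d h ρ := hsub hyB
      have hle : ρ ≤ h₁ y := by
        by_contra hcon
        exact hy1 ⟨hyM, hcon⟩
      rw [hy2]; exact hle
    have step1 : ρ * (δ ^ d - δ ^ d * κ) ≤ ∫ y in B, K (δ⁻¹ • (x - y)) * h y := by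
      have hmono : ∫ y in B, K (δ⁻¹ • (x - y)) * ρ
          ≤ ∫ y in B, K (δ⁻¹ • (x - y)) * h y := by
        refine setIntegral_mono_ae_restrict (hWint.integrableOn.mul_const ρ)
          (hfint x).integrableOn ?_
        filter_upwards [haeB] with y hy
        exact mul_le_mul_of_nonneg_left hy (hK.nonneg _)
      have heq : ∫ y in B, K (δ⁻¹ • (x - y)) * ρ = (δ ^ d - δ ^ d * κ) * ρ := by
        rw [integral_mul_const, hCB]
      rw [heq, mul_comm] at hmono
      exact hmono
    have step2 : ∫ y in B, K (δ⁻¹ • (x - y)) * h y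
        ≤ ∫ y, K (δ⁻¹ • (x - y)) * h y :=
      setIntegral_le_integral (hfint x) (Filter.Eventually.of_forall (hfnn x))
    rw [KdeAux.kdeP_eq hmeas hnn hPdef K δ x]
    calc ρ - κ * M ≤ ρ * (1 - κ) := by nlinarith
      _ = (δ ^ d)⁻¹ * (ρ * (δ ^ d - δ ^ d * κ)) := by
          field_simp
      _ ≤ (δ ^ d)⁻¹ * ∫ y, K (δ⁻¹ • (x - y)) * h y := by
          apply mul_le_mul_of_nonneg_left _ (inv_nonneg.2 hD.le)
          linarith
  · -- part (ii)
    intro x σ hσ hsub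
    set B := {y : Fin d → ℝ | N (y - x) ≤ σ} with hBdef
    set κ := kappaOne d N K (σ / δ) with hκdef
    set S := {y : Fin d → ℝ | ρ ≤ h y} with hSdef
    have hκ0 : 0 ≤ κ := KdeAux.kappaOne_nonneg hK _
    have hBmeas : MeasurableSet B := KdeAux.ball_measurable hN x σ
    have hWint := KdeAux.W_integrable hK hδ x
    have hCB : ∫ y in B, K (δ⁻¹ • (x - y)) = δ ^ d - δ ^ d * κ :=
      KdeAux.ball_integral hN hK hδ x
    have hCT : ∫ y in Bᶜ, K (δ⁻¹ • (x - y)) = δ ^ d * κ :=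
      KdeAux.tail_integral hN hK hδ x
    -- the ball misses the level set, a.e.
    have key : ∀ y ∈ B, ∃ U : Set (Fin d → ℝ), IsOpen U ∧ y ∈ U ∧ volume (U ∩ S) = 0 := by
      intro y hy
      have hy' : ¬ ∀ U : Set (Fin d → ℝ), IsOpen U → y ∈ U →
          0 < volume (U ∩ {z | ρ ≤ h z}) := hsub hy
      push_neg at hy'
      obtain ⟨U, hU1, hU2, hU3⟩ := hy'
      exact ⟨U, hU1, hU2, le_antisymm hU3 zero_le⟩
    have hBS0 : volume (B ∩ S) = 0 := by
      set 𝒰 : Set (Set (Fin d → ℝ)) := {U | IsOpen U ∧ volume (U ∩ S) = 0} with h𝒰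
      have hBsub : B ⊆ ⋃₀ 𝒰 := by
        intro y hy
        obtain ⟨U, h1, h2, h3⟩ := key y hy
        exact ⟨U, ⟨h1, h3⟩, h2⟩
      obtain ⟨T, hTc, hT𝒰, hTeq⟩ :=
        TopologicalSpace.isOpen_sUnion_countable 𝒰 (fun U hU => hU.1)
      have hT0 : volume (⋃₀ T ∩ S) = 0 := by
        rw [Set.sUnion_eq_biUnion, Set.iUnion₂_inter]
        exact (measure_biUnion_null_iff hTc).2 fun U hU => (hT𝒰 hU).2
      refine measure_mono_null (fun y hy => ?_) hT0
      exact ⟨by rw [hTeq]; exact hBsub hy.1, hy.2⟩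
    have haeB' : ∀ᵐ y ∂(volume.restrict B), h y < ρ := by
      rw [ae_restrict_iff' hBmeas]
      have hnm : ∀ᵐ y ∂(volume : Measure (Fin d → ℝ)), y ∉ B ∩ S := by
        rw [ae_iff]; simpa using hBS0
      filter_upwards [hnm] with y hy hyB
      by_contra hcon
      exact hy ⟨hyB, not_lt.1 hcon⟩
    -- positivity of the defect integral
    have hgint : IntegrableOn (fun y => K (δ⁻¹ • (x - y)) * (ρ - h y)) B volume := by
      have := (hWint.integrableOn (s := B)).mul_const ρ |>.sub (hfint x).integrableOn
      refine this.congr (Filter.Eventually.of_forall fun y => ?_)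
      simp [mul_sub]
    have hEpos : 0 < ∫ y in B, K (δ⁻¹ • (x - y)) * (ρ - h y) := by
      have hnnr : 0 ≤ᵐ[volume.restrict B] fun y => K (δ⁻¹ • (x - y)) * (ρ - h y) := by
        filter_upwards [haeB'] with y hy
        exact mul_nonneg (hK.nonneg _) (by linarith)
      rw [setIntegral_pos_iff_support_of_nonneg_ae hnnr hgint]
      obtain ⟨V, hV1, hV2, hV3⟩ := eventually_nhds_iff.1 hK.pos_near_zero
      obtain ⟨Cn, hCn0, hCnle⟩ := KdeAux.norm_le_const hN
      set O := interior B ∩ ((fun y : Fin d → ℝ => δ⁻¹ • (x - y)) ⁻¹' V) with hOdef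
      have hcontmap : Continuous fun y : Fin d → ℝ => δ⁻¹ • (x - y) :=
        (continuous_const.sub continuous_id).const_smul δ⁻¹
      have hOopen : IsOpen O := isOpen_interior.inter (hV2.preimage hcontmap)
      have hxB' : x ∈ interior B := by
        apply mem_interior.2
        refine ⟨Metric.ball x (σ / (Cn + 1)), fun y hy => ?_, Metric.isOpen_ball,
          Metric.mem_ball_self (by positivity)⟩
        have h1 : ‖y - x‖ < σ / (Cn + 1) := by
          rw [← dist_eq_norm]; exact Metric.mem_ball.1 hy
        have h2 : N (y - x) ≤ Cn * ‖y - x‖ := hCnle _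
        have h3 : Cn * ‖y - x‖ ≤ Cn * (σ / (Cn + 1)) :=
          mul_le_mul_of_nonneg_left h1.le hCn0
        have hpos : (0:ℝ) < Cn + 1 := by linarith
        have h4 : Cn * (σ / (Cn + 1)) < σ := by
          rw [← mul_div_assoc, div_lt_iff₀ hpos]
          nlinarith
        show N (y - x) ≤ σ
        linarith
      have hxO : x ∈ O := by
        refine ⟨hxB', ?_⟩
        show δ⁻¹ • (x - x) ∈ V
        simpa using hV3
      have hOpos : 0 < volume O := hOopen.measure_pos volume ⟨x, hxO⟩
      have hOB : O ⊆ B := fun y hy => interior_subset hy.1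
      have hOS : volume (O ∩ S) = 0 :=
        measure_mono_null (Set.inter_subset_inter_left S hOB) hBS0
      have hOSc : 0 < volume (O ∩ Sᶜ) := by
        by_contra hcon
        push_neg at hcon
        have h0 : volume (O ∩ Sᶜ) = 0 := le_antisymm hcon zero_le
        have hle := measure_le_inter_add_diff volume O S
        rw [hOS, Set.diff_eq, h0] at hle
        simp at hle
        exact absurd hle hOpos.ne'
      refine lt_of_lt_of_le hOSc (measure_mono ?_)
      rintro y ⟨hyO, hyS⟩
      refine ⟨?_, hOB hyO⟩
      simp only [Function.mem_support]
      have h1 : 0 < K (δ⁻¹ • (x - y)) := hV1 _ hyO.2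
      have h2 : h y < ρ := not_le.1 hyS
      exact ne_of_gt (mul_pos h1 (by linarith))
    -- split the defect integral
    have hsplit : ∫ y in B, K (δ⁻¹ • (x - y)) * (ρ - h y)
        = ρ * (δ ^ d - δ ^ d * κ) - ∫ y in B, K (δ⁻¹ • (x - y)) * h y := by
      have h1 : ∫ y in B, (K (δ⁻¹ • (x - y)) * ρ - K (δ⁻¹ • (x - y)) * h y)
          = (∫ y in B, K (δ⁻¹ • (x - y)) * ρ) - ∫ y in B, K (δ⁻¹ • (x - y)) * h y :=
        integral_sub ((hWint.integrableOn (s := B)).mul_const ρ) (hfint x).integrableOn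
      have h2 : ∫ y in B, K (δ⁻¹ • (x - y)) * ρ = ρ * (δ ^ d - δ ^ d * κ) := by
        rw [integral_mul_const, hCB, mul_comm]
      rw [← h2, ← h1]
      congr 1; funext y; ring
    have hballle : ∫ y in B, K (δ⁻¹ • (x - y)) * h y
        < ρ * (δ ^ d - δ ^ d * κ) := by linarith
    -- tail bound
    have tailb : ∫ y in Bᶜ, K (δ⁻¹ • (x - y)) * h y ≤ (δ ^ d * κ) * M := by
      have heq2 : ∫ y in Bᶜ, K (δ⁻¹ • (x - y)) * M = (δ ^ d * κ) * M := by
        rw [integral_mul_const, hCT]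
      rw [← heq2]
      refine setIntegral_mono_ae_restrict (hfint x).integrableOn
        ((hWint.integrableOn (s := Bᶜ)).mul_const M) ?_
      filter_upwards [ae_restrict_of_ae hhM] with y hy
      exact mul_le_mul_of_nonneg_left hy (hK.nonneg _)
    -- assemble
    have hdecomp : (∫ y in B, K (δ⁻¹ • (x - y)) * h y)
        + ∫ y in Bᶜ, K (δ⁻¹ • (x - y)) * h y = ∫ y, K (δ⁻¹ • (x - y)) * h y :=
      integral_add_compl hBmeas (hfint x)
    rw [KdeAux.kdeP_eq hmeas hnn hPdef K δ x]
    have htot : ∫ y, K (δ⁻¹ • (x - y)) * h y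
        < ρ * (δ ^ d - δ ^ d * κ) + (δ ^ d * κ) * M := by linarith
    have hfinal : (δ ^ d)⁻¹ * (ρ * (δ ^ d - δ ^ d * κ) + (δ ^ d * κ) * M)
        = ρ - ρ * κ + κ * M := by
      field_simp
    have hρκ : 0 ≤ ρ * κ := mul_nonneg hρ hκ0
    calc (δ ^ d)⁻¹ * ∫ y, K (δ⁻¹ • (x - y)) * h y
        < (δ ^ d)⁻¹ * (ρ * (δ ^ d - δ ^ d * κ) + (δ ^ d * κ) * M) := by
          exact mul_lt_mul_of_pos_left htot (inv_pos.2 hD)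
      _ = ρ - ρ * κ + κ * M := hfinal
      _ ≤ ρ + κ * M := by linarith
end
end

section
/- Let ‖·‖ be a norm on ℝ^d, K : ℝ^d → [0,∞) a symmetric kernel with tail functions κ₁, κ∞ with respect to ‖·‖, X ⊆ ℝ^d compact and connected, and P a λ^d-absolutely continuous probability measure on X that is normal and has a bounded Lebesgue density h. Let ε, δ, σ > 0 and let D = (x₁,…,x_n) ∈ X^n be a data set whose kernel density estimator satisfies sup_{x∈ℝ^d} |h_{D,δ}(x) − h_{P,δ}(x)| < ε. Put ϵ := ‖h‖_∞·κ₁(σ/δ). Then for every ρ ≥ δ^{−d}·κ∞(σ/δ) one has the inclusions M_{ρ+ε+ϵ}^{−2σ} ⊆ L_{D,ρ} ⊆ M_{ρ−ε−ϵ}^{+2σ}, where the enlargements A^{±2σ} are taken inside ℝ^d. -/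
open MeasureTheory ENNReal

noncomputable section

/-- The kernel density estimator of a data set `D = (x₁,…,x_n)`:
`h_{D,δ}(x) = (1/(n δ^d)) Σ_{i=1}^n K((x−x_i)/δ)`. -/
def kdeD (d n : ℕ) (K : (Fin d → ℝ) → ℝ) (δ : ℝ) (D : Fin n → Fin d → ℝ)
    (x : Fin d → ℝ) : ℝ :=
  ((n : ℝ) * δ ^ d)⁻¹ * ∑ i, K (δ⁻¹ • (x - D i))

/-- The distance `d(x, A) := inf_{a ∈ A} ‖x − a‖ ∈ [0,∞]` of a point `x` to a set `A`,
taken with respect to the norm `N` (so `d(x, ∅) = ∞`). -/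
def distN (d : ℕ) (N : (Fin d → ℝ) → ℝ) (x : Fin d → ℝ) (A : Set (Fin d → ℝ)) : ℝ≥0∞ :=
  ⨅ a ∈ A, ENNReal.ofReal (N (x - a))

/-- The enlargement `A^{+δ} := {x ∈ ℝ^d : d(x, A) ≤ δ}` (taken inside all of `ℝ^d`). -/
def plusSet (d : ℕ) (N : (Fin d → ℝ) → ℝ) (A : Set (Fin d → ℝ)) (δ : ℝ) :
    Set (Fin d → ℝ) :=
  {x | distN d N x A ≤ ENNReal.ofReal δ}

/-- The erosion `A^{−δ} := ℝ^d ∖ (ℝ^d ∖ A)^{+δ}` (taken inside all of `ℝ^d`). -/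
def minusSet (d : ℕ) (N : (Fin d → ℝ) → ℝ) (A : Set (Fin d → ℝ)) (δ : ℝ) :
    Set (Fin d → ℝ) :=
  (plusSet d N Aᶜ δ)ᶜ

/-- The level set estimator
`L_{D,ρ} := {x ∈ ℝ^d : ∃ i, h_{D,δ}(x_i) ≥ ρ and ‖x − x_i‖ ≤ σ}`. -/
def levelEst (d n : ℕ) (N K : (Fin d → ℝ) → ℝ) (δ σ : ℝ) (D : Fin n → Fin d → ℝ)
    (ρ : ℝ) : Set (Fin d → ℝ) :=
  {x | ∃ i, ρ ≤ kdeD d n K δ D (D i) ∧ N (x - D i) ≤ σ}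

namespace KDEAux

open Filter Set

variable {d : ℕ} {N K : (Fin d → ℝ) → ℝ}

section Norm

variable (hN : IsNormOn d N)
include hN

theorem norm_zero' : N 0 = 0 := (hN.eq_zero_iff 0).mpr rfl

theorem norm_neg' (x : Fin d → ℝ) : N (-x) = N x := by
  have := hN.smul (-1) x; simpa using this

theorem norm_nonneg' (x : Fin d → ℝ) : 0 ≤ N x := by
  have h1 := hN.triangle x (-x)
  rw [add_neg_cancel, norm_zero' hN, norm_neg' hN] at h1
  linarith

theorem norm_sum_le {ι : Type*} (s : Finset ι) (f : ι → Fin d → ℝ) :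
    N (∑ i ∈ s, f i) ≤ ∑ i ∈ s, N (f i) := by
  classical
  induction s using Finset.induction_on with
  | empty => simp [norm_zero' hN]
  | insert _ _ hnotmem ih =>
    rw [Finset.sum_insert hnotmem, Finset.sum_insert hnotmem]
    exact le_trans (hN.triangle _ _) (by linarith)

theorem norm_le_const_mul (x : Fin d → ℝ) :
    N x ≤ (∑ i, N (Pi.single i 1)) * ‖x‖ := by
  have hx : x = ∑ i, Pi.single i (x i) := by simp [Finset.univ_sum_single]
  calc N x = N (∑ i, Pi.single i (x i)) := by rw [← hx]
    _ ≤ ∑ i, N (Pi.single i (x i)) := norm_sum_le hN _ _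
    _ ≤ ∑ i, N (Pi.single i 1) * ‖x‖ := by
        refine Finset.sum_le_sum fun i _ => ?_
        have hsm : Pi.single i (x i) = (x i) • (Pi.single i (1:ℝ) : Fin d → ℝ) := by
          ext j
          by_cases hj : j = i <;> simp [Pi.single_apply, hj, mul_comm]
        rw [hsm, hN.smul]
        have h1 : |x i| ≤ ‖x‖ := by
          simpa [Real.norm_eq_abs] using norm_le_pi_norm x i
        have := norm_nonneg' hN (Pi.single i (1:ℝ))
        nlinarith
    _ = (∑ i, N (Pi.single i 1)) * ‖x‖ := by rw [Finset.sum_mul]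

theorem norm_continuous : Continuous N := by
  set C : ℝ := ∑ i, N (Pi.single i 1) with hC
  have hC0 : 0 ≤ C := Finset.sum_nonneg fun i _ => norm_nonneg' hN _
  have key : ∀ a b : Fin d → ℝ, N a - N b ≤ C * dist a b := by
    intro a b
    have h1 := hN.triangle (a - b) b
    rw [sub_add_cancel] at h1
    have h2 := norm_le_const_mul hN (a - b)
    rw [dist_eq_norm]
    linarith
  have hlip : LipschitzWith C.toNNReal N := by
    apply LipschitzWith.of_dist_le_mul
    intro a b
    rw [Real.dist_eq, abs_sub_le_iff, Real.coe_toNNReal _ hC0]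
    exact ⟨key a b, by rw [dist_comm]; exact key b a⟩
  exact hlip.continuous

theorem norm_exists_gt (hd : 0 < d) (r : ℝ) : ∃ z : Fin d → ℝ, r < N z := by
  set e : Fin d → ℝ := Pi.single (⟨0, hd⟩ : Fin d) 1 with he
  have he0 : e ≠ 0 := by
    intro hcon
    have := congrFun hcon ⟨0, hd⟩
    simp [he] at this
  have hNe : 0 < N e := by
    rcases (norm_nonneg' hN e).lt_or_eq with hlt | heq
    · exact hlt
    · exact absurd ((hN.eq_zero_iff e).mp heq.symm) he0
  refine ⟨((|r| + 1) / N e) • e, ?_⟩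
  rw [hN.smul]
  have habs : |(|r| + 1) / N e| = (|r| + 1) / N e := by
    rw [abs_of_nonneg]; positivity
  rw [habs, div_mul_cancel₀ _ hNe.ne']
  calc r ≤ |r| := le_abs_self r
    _ < |r| + 1 := by linarith

theorem tail_meas (r : ℝ) : MeasurableSet {z : Fin d → ℝ | r < N z} :=
  measurableSet_lt measurable_const (norm_continuous hN).measurable

theorem ball_meas (x : Fin d → ℝ) (σ : ℝ) :
    MeasurableSet {y : Fin d → ℝ | N (x - y) ≤ σ} := by
  have hc : Continuous fun y : Fin d → ℝ => N (x - y) :=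
    (norm_continuous hN).comp (continuous_const.sub continuous_id)
  exact measurableSet_le hc.measurable measurable_const

theorem shell_meas (x : Fin d → ℝ) (σ : ℝ) :
    MeasurableSet {y : Fin d → ℝ | σ < N (x - y)} := by
  have hc : Continuous fun y : Fin d → ℝ => N (x - y) :=
    (norm_continuous hN).comp (continuous_const.sub continuous_id)
  exact measurableSet_lt measurable_const hc.measurable

theorem ball_vol_pos {σ : ℝ} (hσ : 0 < σ) (x : Fin d → ℝ) :
    0 < volume {y : Fin d → ℝ | N (x - y) ≤ σ} := by
  set C : ℝ := ∑ i, N (Pi.single i 1) with hC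
  have hC0 : 0 ≤ C := Finset.sum_nonneg fun i _ => norm_nonneg' hN _
  have hsub : Metric.ball x (σ / (C + 1)) ⊆ {y : Fin d → ℝ | N (x - y) ≤ σ} := by
    intro y hy
    have h1 := norm_le_const_mul hN (x - y)
    have h2 : ‖x - y‖ < σ / (C + 1) := by
      rw [norm_sub_rev, ← dist_eq_norm]
      exact Metric.mem_ball.mp hy
    have h3 : (0:ℝ) ≤ ‖x - y‖ := norm_nonneg _
    have h4 : C * ‖x - y‖ ≤ C * (σ / (C + 1)) := by nlinarith
    have h5 : C * (σ / (C + 1)) ≤ σ := by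
      rw [← mul_div_assoc, div_le_iff₀ (by linarith : (0:ℝ) < C + 1)]
      nlinarith
    simp only [Set.mem_setOf_eq]
    linarith
  exact lt_of_lt_of_le (Metric.measure_ball_pos volume x (by positivity)) (measure_mono hsub)

end Norm

section Kernel

theorem integrable_of_kernel (hK : IsSymmKernel d K) : Integrable K := by
  by_contra hc
  have hone := hK.integral_one
  rw [integral_undef hc] at hone
  norm_num at hone

theorem integral_comp_shift_smul {δ : ℝ} (hδ : 0 < δ) (x : Fin d → ℝ)
    (g : (Fin d → ℝ) → ℝ) :
    ∫ y, g (δ⁻¹ • (x - y)) = δ ^ d * ∫ z, g z := by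
  have h1 : ∫ y, g (δ⁻¹ • (x - y)) = ∫ w, g (δ⁻¹ • w) :=
    (Measure.measurePreserving_sub_left volume x).integral_comp
      (MeasurableEquiv.subLeft x).measurableEmbedding (fun w => g (δ⁻¹ • w))
  rw [h1, Measure.integral_comp_smul volume (fun w => g w) δ⁻¹]
  have hfr : Module.finrank ℝ (Fin d → ℝ) = d := Module.finrank_fin_fun ℝ
  rw [hfr, smul_eq_mul]
  congr 1
  rw [inv_pow, inv_inv, abs_of_nonneg (by positivity)]

theorem integrable_shift {δ : ℝ} (hδ : 0 < δ) (x : Fin d → ℝ)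
    (hK : IsSymmKernel d K) : Integrable (fun y => K (δ⁻¹ • (x - y))) := by
  have h2 : Integrable (fun w => K (δ⁻¹ • w)) :=
    (integrable_of_kernel hK).comp_smul (inv_ne_zero hδ.ne')
  exact ((Measure.measurePreserving_sub_left volume x).integrable_comp_emb
      (MeasurableEquiv.subLeft x).measurableEmbedding).2 h2

theorem measurable_shift {δ : ℝ} (hK : IsSymmKernel d K) (x : Fin d → ℝ) :
    Measurable (fun y : Fin d → ℝ => K (δ⁻¹ • (x - y))) :=
  hK.measurable.comp ((measurable_const.sub measurable_id).const_smul δ⁻¹)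

theorem kappaOne_nonneg (hN : IsNormOn d N) (hK : IsSymmKernel d K) (r : ℝ) :
    0 ≤ kappaOne d N K r :=
  setIntegral_nonneg (tail_meas hN r) fun y _ => hK.nonneg y

theorem le_kappaInf (hN : IsNormOn d N) (hK : IsSymmKernel d K) {r : ℝ}
    {z : Fin d → ℝ} (hz : r < N z) : K z ≤ kappaInf d N K r :=
  le_csSup (hK.bddAbove.mono (Set.image_subset_range _ _)) ⟨z, hz, rfl⟩

theorem kappaInf_nonneg (hd : 0 < d) (hN : IsNormOn d N) (hK : IsSymmKernel d K)
    (r : ℝ) : 0 ≤ kappaInf d N K r := by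
  obtain ⟨z, hz⟩ := norm_exists_gt hN hd r
  exact le_trans (hK.nonneg z) (le_kappaInf hN hK hz)

theorem norm_inv_smul {δ : ℝ} (hδ : 0 < δ) (hN : IsNormOn d N) (w : Fin d → ℝ) :
    N (δ⁻¹ • w) = δ⁻¹ * N w := by
  rw [hN.smul, abs_of_nonneg (inv_nonneg.2 hδ.le)]

theorem cond_iff {δ σ : ℝ} (hδ : 0 < δ) (hN : IsNormOn d N) (w : Fin d → ℝ) :
    σ / δ < N (δ⁻¹ • w) ↔ σ < N w := by
  rw [norm_inv_smul hδ hN, div_eq_mul_inv, mul_comm δ⁻¹ (N w)]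
  exact ⟨fun h => lt_of_mul_lt_mul_right h (inv_pos.2 hδ).le,
    fun h => mul_lt_mul_of_pos_right h (inv_pos.2 hδ)⟩

theorem integral_tail (hN : IsNormOn d N) (hK : IsSymmKernel d K) {δ : ℝ}
    (hδ : 0 < δ) (σ : ℝ) (x : Fin d → ℝ) :
    ∫ y in {y : Fin d → ℝ | σ < N (x - y)}, K (δ⁻¹ • (x - y)) =
      δ ^ d * kappaOne d N K (σ / δ) := by
  have hmeas : MeasurableSet {z : Fin d → ℝ | σ / δ < N z} := tail_meas hN _
  have hpt : ∀ y : Fin d → ℝ,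
      Set.indicator {y : Fin d → ℝ | σ < N (x - y)}
        (fun y => K (δ⁻¹ • (x - y))) y =
      Set.indicator {z : Fin d → ℝ | σ / δ < N z} K (δ⁻¹ • (x - y)) := by
    intro y
    rw [Set.indicator_apply, Set.indicator_apply]
    congr 1
    simp only [Set.mem_setOf_eq, eq_iff_iff]
    exact (cond_iff hδ hN (x - y)).symm
  have hms : MeasurableSet {y : Fin d → ℝ | σ < N (x - y)} := shell_meas hN x σ
  rw [← integral_indicator hms]
  calc ∫ y, Set.indicator {y : Fin d → ℝ | σ < N (x - y)}
        (fun y => K (δ⁻¹ • (x - y))) y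
      = ∫ y, Set.indicator {z : Fin d → ℝ | σ / δ < N z} K (δ⁻¹ • (x - y)) := by
        congr 1; funext y; exact hpt y
    _ = δ ^ d * ∫ z, Set.indicator {z : Fin d → ℝ | σ / δ < N z} K z :=
        integral_comp_shift_smul hδ x _
    _ = δ ^ d * kappaOne d N K (σ / δ) := by rw [integral_indicator hmeas]; rfl

theorem integral_total (hK : IsSymmKernel d K) {δ : ℝ} (hδ : 0 < δ)
    (x : Fin d → ℝ) : ∫ y, K (δ⁻¹ • (x - y)) = δ ^ d := by
  rw [integral_comp_shift_smul hδ x K, hK.integral_one, mul_one]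

theorem integral_ball (hN : IsNormOn d N) (hK : IsSymmKernel d K) {δ : ℝ}
    (hδ : 0 < δ) (σ : ℝ) (x : Fin d → ℝ) :
    ∫ y in {y : Fin d → ℝ | N (x - y) ≤ σ}, K (δ⁻¹ • (x - y)) =
      δ ^ d * (1 - kappaOne d N K (σ / δ)) := by
  have hms : MeasurableSet {y : Fin d → ℝ | σ < N (x - y)} := shell_meas hN x σ
  have hcompl : {y : Fin d → ℝ | σ < N (x - y)}ᶜ = {y : Fin d → ℝ | N (x - y) ≤ σ} := by
    ext y; simp [not_lt]
  have hsplit := integral_add_compl hms (integrable_shift hδ x hK)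
  rw [hcompl] at hsplit
  have h1 := integral_tail hN hK hδ σ x
  have h2 := integral_total hK hδ x
  rw [h1, h2] at hsplit
  linarith [hsplit]

end Kernel


section Density

variable {P : Measure (Fin d → ℝ)} {h : (Fin d → ℝ) → ℝ}

theorem integrable_density [IsProbabilityMeasure P] (hdens : IsDensityOf d P h) :
    Integrable h := by
  constructor
  · exact hdens.1.aestronglyMeasurable
  · rw [HasFiniteIntegral]
    have hpt : ∀ y, (‖h y‖₊ : ℝ≥0∞) = ENNReal.ofReal (h y) := fun y =>
      Real.enorm_eq_ofReal (hdens.2.1 y)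
    calc ∫⁻ y, (‖h y‖₊ : ℝ≥0∞) = ∫⁻ y, ENNReal.ofReal (h y) := by simp_rw [hpt]
      _ = P Set.univ := by
          rw [hdens.2.2, withDensity_apply _ MeasurableSet.univ, setLIntegral_univ]
      _ < ⊤ := by simp [measure_univ]

theorem density_ae_eq {h₁ : (Fin d → ℝ) → ℝ} (hd1 : IsDensityOf d P h)
    (hd2 : IsDensityOf d P h₁) : h =ᵐ[volume] h₁ := by
  have heq : volume.withDensity (fun x => ENNReal.ofReal (h x)) =
      volume.withDensity (fun x => ENNReal.ofReal (h₁ x)) := by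
    rw [← hd1.2.2, ← hd2.2.2]
  have hae := (withDensity_eq_iff_of_sigmaFinite
    (ENNReal.measurable_ofReal.comp hd1.1).aemeasurable
    (ENNReal.measurable_ofReal.comp hd2.1).aemeasurable).1 heq
  filter_upwards [hae] with y hy
  exact (ENNReal.ofReal_eq_ofReal_iff (hd1.2.1 y) (hd2.2.1 y)).1 hy

theorem kdeP_eq (hdens : IsDensityOf d P h) (δ : ℝ) (x : Fin d → ℝ) :
    kdeP d K δ P x = (δ ^ d)⁻¹ * ∫ y, K (δ⁻¹ • (x - y)) * h y := by
  rw [kdeP, hdens.2.2]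
  congr 1
  have hrw : (fun x => ENNReal.ofReal (h x)) =
      (fun x => (((h x).toNNReal :) : ℝ≥0∞)) := rfl
  rw [hrw, integral_withDensity_eq_integral_smul hdens.1.real_toNNReal]
  congr 1
  funext y
  rw [NNReal.smul_def, Real.coe_toNNReal _ (hdens.2.1 y), smul_eq_mul, mul_comm]

theorem integrable_kernel_mul [IsProbabilityMeasure P] (hK : IsSymmKernel d K)
    (hdens : IsDensityOf d P h) {δ : ℝ} (hδ : 0 < δ) (x : Fin d → ℝ) :
    Integrable (fun y => K (δ⁻¹ • (x - y)) * h y) := by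
  obtain ⟨C, hC⟩ := hK.bddAbove
  refine Integrable.bdd_mul (c := C) (integrable_density hdens)
    (measurable_shift hK x).aestronglyMeasurable (Filter.Eventually.of_forall fun y => ?_)
  rw [Real.norm_eq_abs, abs_of_nonneg (hK.nonneg _)]
  exact hC (Set.mem_range_self _)

/-- Upper bound for the infinite-sample KDE when `h ≤ θ` a.e. on the ball. -/
theorem kdeP_le_of_ae [IsProbabilityMeasure P] (hN : IsNormOn d N)
    (hK : IsSymmKernel d K) (hdens : IsDensityOf d P h)
    (hbnd : Filter.IsBoundedUnder (· ≤ ·) (ae (volume : Measure (Fin d → ℝ))) h)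
    {δ σ θ : ℝ} (hδ : 0 < δ) (hθ : 0 ≤ θ) (x : Fin d → ℝ)
    (hae : ∀ᵐ y ∂(volume.restrict {y : Fin d → ℝ | N (x - y) ≤ σ}), h y ≤ θ) :
    kdeP d K δ P x ≤ θ + essSup h volume * kappaOne d N K (σ / δ) := by
  set es := essSup h volume with hes
  have hesae : ∀ᵐ y ∂(volume : Measure (Fin d → ℝ)), h y ≤ es := ae_le_essSup hbnd
  set s := {y : Fin d → ℝ | N (x - y) ≤ σ} with hs_def
  have hs : MeasurableSet s := ball_meas hN x σ
  have hKint := integrable_shift hδ x hK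
  have hKh := integrable_kernel_mul hK hdens hδ x
  have hsplit : ∫ y, K (δ⁻¹ • (x - y)) * h y =
      (∫ y in s, K (δ⁻¹ • (x - y)) * h y) + ∫ y in sᶜ, K (δ⁻¹ • (x - y)) * h y :=
    (integral_add_compl hs hKh).symm
  have hκ := kappaOne_nonneg hN hK (σ / δ)
  have hδd : (0:ℝ) < δ ^ d := by positivity
  have hA : ∫ y in s, K (δ⁻¹ • (x - y)) * h y ≤ θ * δ ^ d := by
    have h1 : ∫ y in s, K (δ⁻¹ • (x - y)) * h y ≤ ∫ y in s, K (δ⁻¹ • (x - y)) * θ :=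
      setIntegral_mono_ae_restrict hKh.integrableOn (hKint.mul_const θ).integrableOn
        (by filter_upwards [hae] with y hy; exact mul_le_mul_of_nonneg_left hy (hK.nonneg _))
    have h2 : ∫ y in s, K (δ⁻¹ • (x - y)) * θ = (∫ y in s, K (δ⁻¹ • (x - y))) * θ :=
      integral_mul_const θ _
    have h3 : ∫ y in s, K (δ⁻¹ • (x - y)) ≤ ∫ y, K (δ⁻¹ • (x - y)) :=
      setIntegral_le_integral hKint (Filter.Eventually.of_forall fun y => hK.nonneg _)
    have h4 := integral_total hK hδ x
    have h5 : (0:ℝ) ≤ ∫ y in s, K (δ⁻¹ • (x - y)) :=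
      setIntegral_nonneg hs fun y _ => hK.nonneg _
    nlinarith
  have hB : ∫ y in sᶜ, K (δ⁻¹ • (x - y)) * h y ≤ es * (δ ^ d * kappaOne d N K (σ / δ)) := by
    have h1 : ∫ y in sᶜ, K (δ⁻¹ • (x - y)) * h y ≤ ∫ y in sᶜ, K (δ⁻¹ • (x - y)) * es :=
      setIntegral_mono_ae_restrict hKh.integrableOn (hKint.mul_const es).integrableOn
        (by filter_upwards [ae_restrict_of_ae hesae] with y hy
            exact mul_le_mul_of_nonneg_left hy (hK.nonneg _))
    have h2 : sᶜ = {y : Fin d → ℝ | σ < N (x - y)} := by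
      ext y; simp [hs_def, not_le]
    have h3 : ∫ y in sᶜ, K (δ⁻¹ • (x - y)) = δ ^ d * kappaOne d N K (σ / δ) := by
      rw [h2, integral_tail hN hK hδ σ x]
    calc ∫ y in sᶜ, K (δ⁻¹ • (x - y)) * h y
        ≤ ∫ y in sᶜ, K (δ⁻¹ • (x - y)) * es := h1
      _ = (∫ y in sᶜ, K (δ⁻¹ • (x - y))) * es := integral_mul_const es _
      _ = es * (δ ^ d * kappaOne d N K (σ / δ)) := by rw [h3]; ring
  rw [kdeP_eq hdens, hsplit]
  have hfin : (δ ^ d)⁻¹ * (θ * δ ^ d + es * (δ ^ d * kappaOne d N K (σ / δ))) =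
      θ + es * kappaOne d N K (σ / δ) := by
    field_simp
  calc (δ ^ d)⁻¹ * ((∫ y in s, K (δ⁻¹ • (x - y)) * h y) +
        ∫ y in sᶜ, K (δ⁻¹ • (x - y)) * h y)
      ≤ (δ ^ d)⁻¹ * (θ * δ ^ d + es * (δ ^ d * kappaOne d N K (σ / δ))) := by
        apply mul_le_mul_of_nonneg_left (add_le_add hA hB) (by positivity)
    _ = θ + es * kappaOne d N K (σ / δ) := hfin

/-- Lower bound for the infinite-sample KDE when `h ≥ θ` a.e. on the ball. -/
theorem le_kdeP_of_ae [IsProbabilityMeasure P] (hN : IsNormOn d N)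
    (hK : IsSymmKernel d K) (hdens : IsDensityOf d P h)
    {δ σ θ : ℝ} (hδ : 0 < δ) (hθ : 0 ≤ θ) (x : Fin d → ℝ)
    (hae : ∀ᵐ y ∂(volume.restrict {y : Fin d → ℝ | N (x - y) ≤ σ}), θ ≤ h y) :
    θ * (1 - kappaOne d N K (σ / δ)) ≤ kdeP d K δ P x := by
  set s := {y : Fin d → ℝ | N (x - y) ≤ σ} with hs_def
  have hs : MeasurableSet s := ball_meas hN x σ
  have hKint := integrable_shift hδ x hK
  have hKh := integrable_kernel_mul hK hdens hδ x
  have hδd : (0:ℝ) < δ ^ d := by positivity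
  have hsplit : ∫ y, K (δ⁻¹ • (x - y)) * h y =
      (∫ y in s, K (δ⁻¹ • (x - y)) * h y) + ∫ y in sᶜ, K (δ⁻¹ • (x - y)) * h y :=
    (integral_add_compl hs hKh).symm
  have hB : (0:ℝ) ≤ ∫ y in sᶜ, K (δ⁻¹ • (x - y)) * h y :=
    setIntegral_nonneg hs.compl fun y _ => mul_nonneg (hK.nonneg _) (hdens.2.1 y)
  have hA : θ * (δ ^ d * (1 - kappaOne d N K (σ / δ))) ≤
      ∫ y in s, K (δ⁻¹ • (x - y)) * h y := by
    have h1 : ∫ y in s, K (δ⁻¹ • (x - y)) * θ ≤ ∫ y in s, K (δ⁻¹ • (x - y)) * h y :=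
      setIntegral_mono_ae_restrict (hKint.mul_const θ).integrableOn hKh.integrableOn
        (by filter_upwards [hae] with y hy; exact mul_le_mul_of_nonneg_left hy (hK.nonneg _))
    have h2 : ∫ y in s, K (δ⁻¹ • (x - y)) * θ = (∫ y in s, K (δ⁻¹ • (x - y))) * θ :=
      integral_mul_const θ _
    have h3 := integral_ball hN hK hδ σ x
    rw [h2, h3] at h1
    calc θ * (δ ^ d * (1 - kappaOne d N K (σ / δ)))
        = δ ^ d * (1 - kappaOne d N K (σ / δ)) * θ := by ring
      _ ≤ ∫ y in s, K (δ⁻¹ • (x - y)) * h y := h1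
  rw [kdeP_eq hdens, hsplit]
  have hge : θ * (δ ^ d * (1 - kappaOne d N K (σ / δ))) ≤
      (∫ y in s, K (δ⁻¹ • (x - y)) * h y) + ∫ y in sᶜ, K (δ⁻¹ • (x - y)) * h y := by
    linarith
  have hfin : (δ ^ d)⁻¹ * (θ * (δ ^ d * (1 - kappaOne d N K (σ / δ)))) =
      θ * (1 - kappaOne d N K (σ / δ)) := by
    field_simp
  calc θ * (1 - kappaOne d N K (σ / δ))
      = (δ ^ d)⁻¹ * (θ * (δ ^ d * (1 - kappaOne d N K (σ / δ)))) := hfin.symm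
    _ ≤ (δ ^ d)⁻¹ * ((∫ y in s, K (δ⁻¹ • (x - y)) * h y) +
        ∫ y in sᶜ, K (δ⁻¹ • (x - y)) * h y) :=
        mul_le_mul_of_nonneg_left hge (by positivity)

end Density


section MsetFacts

variable {h : (Fin d → ℝ) → ℝ}

theorem Mset_compl_inter_null (hh : Measurable h) (θ : ℝ) :
    volume ((Mset d h θ)ᶜ ∩ {y : Fin d → ℝ | θ ≤ h y}) = 0 := by
  have hsm : MeasurableSet {y : Fin d → ℝ | θ ≤ h y} :=
    measurableSet_le measurable_const hh
  have key : (volume.restrict {y : Fin d → ℝ | θ ≤ h y}) (Mset d h θ)ᶜ = 0 := by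
    apply measure_null_of_locally_null
    intro x hx
    simp only [Mset, Set.mem_compl_iff, Set.mem_setOf_eq, not_forall] at hx
    obtain ⟨U, hU, hxU, hUnull⟩ := hx
    refine ⟨U, mem_nhdsWithin_of_mem_nhds (hU.mem_nhds hxU), ?_⟩
    rw [Measure.restrict_apply' hsm]
    exact le_zero_iff.mp (not_lt.mp hUnull)
  rw [Measure.restrict_apply' hsm] at key
  exact key

theorem Mset_eq_univ (hpos : ∀ x, 0 ≤ h x) {θ : ℝ} (hθ : θ ≤ 0) :
    Mset d h θ = Set.univ := by
  ext x
  simp only [Mset, Set.mem_setOf_eq, Set.mem_univ, iff_true]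
  intro U hU hxU
  have huniv : {y : Fin d → ℝ | θ ≤ h y} = Set.univ := by
    ext y; simp only [Set.mem_setOf_eq, Set.mem_univ, iff_true]
    exact le_trans hθ (hpos y)
  rw [huniv, Set.inter_univ]
  exact hU.measure_pos volume ⟨x, hxU⟩

end MsetFacts

section KdeD

theorem kdeD_le_kappaInf {n : ℕ} (hd : 0 < d) (hN : IsNormOn d N)
    (hK : IsSymmKernel d K) {δ σ : ℝ} (hδ : 0 < δ)
    (D : Fin n → Fin d → ℝ) (x : Fin d → ℝ) (hfar : ∀ i, σ < N (x - D i)) :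
    kdeD d n K δ D x ≤ (δ ^ d)⁻¹ * kappaInf d N K (σ / δ) := by
  have hκ := kappaInf_nonneg hd hN hK (σ / δ)
  have hδd : (0:ℝ) < δ ^ d := by positivity
  rcases Nat.eq_zero_or_pos n with hn | hn
  · subst hn
    simp only [kdeD, Finset.univ_eq_empty, Finset.sum_empty, mul_zero]
    positivity
  · have heach : ∀ i, K (δ⁻¹ • (x - D i)) ≤ kappaInf d N K (σ / δ) := fun i =>
      le_kappaInf hN hK ((cond_iff hδ hN (x - D i)).mpr (hfar i))
    have hsum : ∑ i, K (δ⁻¹ • (x - D i)) ≤ (n : ℝ) * kappaInf d N K (σ / δ) := by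
      calc ∑ i, K (δ⁻¹ • (x - D i)) ≤ ∑ _i : Fin n, kappaInf d N K (σ / δ) :=
            Finset.sum_le_sum fun i _ => heach i
        _ = (n : ℝ) * kappaInf d N K (σ / δ) := by
            rw [Finset.sum_const, Finset.card_univ, Fintype.card_fin, nsmul_eq_mul]
    have hn0 : (0:ℝ) < (n : ℝ) := by exact_mod_cast hn
    rw [kdeD]
    have hinv : ((n : ℝ) * δ ^ d)⁻¹ = (n : ℝ)⁻¹ * (δ ^ d)⁻¹ := by
      rw [mul_inv]
    rw [hinv]
    calc (n : ℝ)⁻¹ * (δ ^ d)⁻¹ * ∑ i, K (δ⁻¹ • (x - D i))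
        ≤ (n : ℝ)⁻¹ * (δ ^ d)⁻¹ * ((n : ℝ) * kappaInf d N K (σ / δ)) := by
          apply mul_le_mul_of_nonneg_left hsum (by positivity)
      _ = (δ ^ d)⁻¹ * kappaInf d N K (σ / δ) := by
          field_simp
end KdeD


end KDEAux

/-- (Uncertainty control for KDE level sets, bounded-density version.)
Let `‖·‖` be a norm on `ℝ^d`, `K` a symmetric kernel with tail function `κ₁`, `X ⊆ ℝ^d`
compact and connected, and `P` a Lebesgue-absolutely continuous probability measure on `X`
that is normal and has a bounded Lebesgue density `h`.  Let `ε, δ, σ > 0` and let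
`D ∈ X^n` satisfy `sup_{x∈ℝ^d} |h_{D,δ}(x) − h_{P,δ}(x)| < ε`.  Put
`ϵ := ‖h‖_∞·κ₁(σ/δ)`.  Then for every `ρ ≥ δ^{−d}·κ∞(σ/δ)` one has
`M_{ρ+ε+ϵ}^{−2σ} ⊆ L_{D,ρ} ⊆ M_{ρ−ε−ϵ}^{+2σ}`, the enlargements taken in `ℝ^d`. -/
theorem levelEst_uncertainty_control_bounded {d n : ℕ} (hd : 0 < d)
    (N : (Fin d → ℝ) → ℝ) (hN : IsNormOn d N)
    (K : (Fin d → ℝ) → ℝ) (hK : IsSymmKernel d K)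
    (X : Set (Fin d → ℝ)) (hXcompact : IsCompact X) (hXconn : IsConnected X)
    (P : Measure (Fin d → ℝ)) [IsProbabilityMeasure P] (hPX : P Xᶜ = 0)
    (h : (Fin d → ℝ) → ℝ) (hdens : IsDensityOf d P h)
    (hbdd : ∃ C : ℝ, ∀ᵐ x ∂(volume : Measure (Fin d → ℝ)), h x ≤ C)
    (hnormal : ∀ ρ : ℝ, 0 ≤ ρ → NormalAtLevel d P h ρ)
    (ε δ σ : ℝ) (hε : 0 < ε) (hδ : 0 < δ) (hσ : 0 < σ)
    (D : Fin n → Fin d → ℝ) (hD : ∀ i, D i ∈ X)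
    (happrox : (⨆ x : Fin d → ℝ, ENNReal.ofReal |kdeD d n K δ D x - kdeP d K δ P x|) <
      ENNReal.ofReal ε)
    (ρ : ℝ) (hρ : (δ ^ d)⁻¹ * kappaInf d N K (σ / δ) ≤ ρ) :
    minusSet d N
        (Mset d h (ρ + ε + essSup h volume * kappaOne d N K (σ / δ))) (2 * σ) ⊆
      levelEst d n N K δ σ D ρ ∧
    levelEst d n N K δ σ D ρ ⊆
      plusSet d N
        (Mset d h (ρ - ε - essSup h volume * kappaOne d N K (σ / δ))) (2 * σ) := by
  classical
  have hκ1 : 0 ≤ kappaOne d N K (σ / δ) := KDEAux.kappaOne_nonneg hN hK _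
  have hκi : 0 ≤ kappaInf d N K (σ / δ) := KDEAux.kappaInf_nonneg hd hN hK _
  have hδd : (0:ℝ) < δ ^ d := by positivity
  have hρ0 : 0 ≤ ρ := le_trans (mul_nonneg (by positivity) hκi) hρ
  have hbnd : Filter.IsBoundedUnder (· ≤ ·) (ae (volume : Measure (Fin d → ℝ))) h := by
    obtain ⟨C, hC⟩ := hbdd
    exact ⟨C, Filter.eventually_map.2 hC⟩
  have h_le_es : ∀ᵐ y ∂(volume : Measure (Fin d → ℝ)), h y ≤ essSup h volume :=
    ae_le_essSup hbnd
  haveI hne : (ae (volume : Measure (Fin d → ℝ))).NeBot := by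
    rw [ae_neBot]
    intro h0
    have hpos := isOpen_univ.measure_pos (volume : Measure (Fin d → ℝ)) ⟨0, trivial⟩
    rw [h0] at hpos
    simp at hpos
  have hes0 : 0 ≤ essSup h volume := by
    obtain ⟨y, hy1, hy2⟩ :=
      (h_le_es.and (Filter.Eventually.of_forall fun y => hdens.2.1 y)).exists
    exact le_trans hy2 hy1
  have hclose : ∀ x, |kdeD d n K δ D x - kdeP d K δ P x| < ε := by
    intro x
    have h1 : ENNReal.ofReal |kdeD d n K δ D x - kdeP d K δ P x| < ENNReal.ofReal ε :=
      lt_of_le_of_lt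
        (le_iSup (fun x => ENNReal.ofReal |kdeD d n K δ D x - kdeP d K δ P x|) x) happrox
    exact (ENNReal.ofReal_lt_ofReal_iff hε).1 h1
  have hNzero : N 0 = 0 := KDEAux.norm_zero' hN
  constructor
  · -- left inclusion M^{-2σ} ⊆ L
    intro x hx
    have hθ'pos : 0 < ρ + ε + essSup h volume * kappaOne d N K (σ / δ) := by
      have := mul_nonneg hes0 hκ1
      linarith
    have hx' : ¬ (distN d N x
        (Mset d h (ρ + ε + essSup h volume * kappaOne d N K (σ / δ)))ᶜ ≤
        ENNReal.ofReal (2 * σ)) := hx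
    have hball2 : ∀ y, N (x - y) ≤ 2 * σ →
        y ∈ Mset d h (ρ + ε + essSup h volume * kappaOne d N K (σ / δ)) := by
      intro y hy
      by_contra hyc
      apply hx'
      calc distN d N x (Mset d h (ρ + ε + essSup h volume * kappaOne d N K (σ / δ)))ᶜ
          ≤ ENNReal.ofReal (N (x - y)) := iInf₂_le y hyc
        _ ≤ ENNReal.ofReal (2 * σ) := ENNReal.ofReal_le_ofReal hy
    obtain ⟨h₁, h₂, hd1, hd2, hnull1, -⟩ := hnormal _ hθ'pos.le
    have haeh : h =ᵐ[volume] h₁ := KDEAux.density_ae_eq hdens hd1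
    have hMae : ∀ᵐ y ∂(volume : Measure (Fin d → ℝ)),
        y ∈ Mset d h (ρ + ε + essSup h volume * kappaOne d N K (σ / δ)) →
        ρ + ε + essSup h volume * kappaOne d N K (σ / δ) ≤ h y := by
      have e1 : ∀ᵐ y ∂(volume : Measure (Fin d → ℝ)),
          y ∈ Mset d h (ρ + ε + essSup h volume * kappaOne d N K (σ / δ)) →
          ρ + ε + essSup h volume * kappaOne d N K (σ / δ) ≤ h₁ y := by
        rw [ae_iff]
        have hseteq : {y | ¬(y ∈ Mset d h (ρ + ε + essSup h volume * kappaOne d N K (σ / δ)) →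
            ρ + ε + essSup h volume * kappaOne d N K (σ / δ) ≤ h₁ y)} =
            Mset d h (ρ + ε + essSup h volume * kappaOne d N K (σ / δ)) \
              {x | ρ + ε + essSup h volume * kappaOne d N K (σ / δ) ≤ h₁ x} := by
          ext y
          simp only [Set.mem_setOf_eq, Set.mem_diff, Classical.not_imp]
        rw [hseteq]
        exact hnull1
      filter_upwards [e1, haeh] with y hy1 hy2
      intro hyM
      rw [hy2]
      exact hy1 hyM
    have haeball : ∀ u : Fin d → ℝ, N (x - u) ≤ σ →
        ∀ᵐ y ∂(volume.restrict {y : Fin d → ℝ | N (u - y) ≤ σ}),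
          ρ + ε + essSup h volume * kappaOne d N K (σ / δ) ≤ h y := by
      intro u hu
      filter_upwards [ae_restrict_of_ae hMae,
        ae_restrict_mem (KDEAux.ball_meas hN u σ)] with y hy1 hy2
      apply hy1
      apply hball2
      have tri : N (x - y) ≤ N (x - u) + N (u - y) := by
        have := hN.triangle (x - u) (u - y)
        simpa [sub_add_sub_cancel] using this
      have huy : N (u - y) ≤ σ := hy2
      linarith
    have hxself : N (x - x) ≤ σ := by rw [sub_self, hNzero]; exact hσ.le
    have hθ'es : ρ + ε + essSup h volume * kappaOne d N K (σ / δ) ≤ essSup h volume := by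
      have hres := haeball x hxself
      have hpos := KDEAux.ball_vol_pos hN hσ x
      haveI : (ae (volume.restrict {y : Fin d → ℝ | N (x - y) ≤ σ})).NeBot := by
        rw [ae_neBot]
        intro h0
        exact absurd (Measure.restrict_eq_zero.mp h0) hpos.ne'
      obtain ⟨y, hy1, hy2⟩ := (hres.and (ae_restrict_of_ae h_le_es)).exists
      exact le_trans hy1 hy2
    have hFactA : ∀ u : Fin d → ℝ, N (x - u) ≤ σ → ρ + ε ≤ kdeP d K δ P u := by
      intro u hu
      have hlow := KDEAux.le_kdeP_of_ae hN hK hdens hδ hθ'pos.le u (haeball u hu)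
      nlinarith [mul_nonneg hes0 hκ1]
    have hkdeD : ∀ u : Fin d → ℝ, N (x - u) ≤ σ → ρ < kdeD d n K δ D u := by
      intro u hu
      have h1 := hFactA u hu
      have h2 := (abs_lt.mp (hclose u)).1
      linarith
    have hex : ∃ i, N (x - D i) ≤ σ := by
      by_contra hc
      push_neg at hc
      have h1 := KDEAux.kdeD_le_kappaInf hd hN hK hδ D x hc
      have h2 := hkdeD x hxself
      linarith
    obtain ⟨i, hi⟩ := hex
    exact ⟨i, (hkdeD (D i) hi).le, hi⟩
  · -- right inclusion L ⊆ M^{+2σ}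
    rintro x ⟨i, hρi, hxi⟩
    by_cases hcase : ∃ a ∈ Mset d h (ρ - ε - essSup h volume * kappaOne d N K (σ / δ)),
        N (D i - a) ≤ σ
    · obtain ⟨a, ha, hNa⟩ := hcase
      show distN d N x (Mset d h (ρ - ε - essSup h volume * kappaOne d N K (σ / δ))) ≤
        ENNReal.ofReal (2 * σ)
      calc distN d N x (Mset d h (ρ - ε - essSup h volume * kappaOne d N K (σ / δ)))
          ≤ ENNReal.ofReal (N (x - a)) := iInf₂_le a ha
        _ ≤ ENNReal.ofReal (2 * σ) := by
            apply ENNReal.ofReal_le_ofReal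
            have tri : N (x - a) ≤ N (x - D i) + N (D i - a) := by
              have := hN.triangle (x - D i) (D i - a)
              simpa [sub_add_sub_cancel] using this
            linarith
    · exfalso
      push_neg at hcase
      have hθpos : 0 < ρ - ε - essSup h volume * kappaOne d N K (σ / δ) := by
        by_contra hcon
        push_neg at hcon
        have hDi := hcase (D i)
          (by rw [KDEAux.Mset_eq_univ hdens.2.1 hcon]; trivial)
        rw [sub_self, hNzero] at hDi
        linarith
      have hsub : {y : Fin d → ℝ | N (D i - y) ≤ σ} ⊆
          (Mset d h (ρ - ε - essSup h volume * kappaOne d N K (σ / δ)))ᶜ := by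
        intro y hy hyM
        exact absurd hy (not_le.mpr (hcase y hyM))
      have hnull := KDEAux.Mset_compl_inter_null hdens.1
        (ρ - ε - essSup h volume * kappaOne d N K (σ / δ))
      have hae : ∀ᵐ y ∂(volume.restrict {y : Fin d → ℝ | N (D i - y) ≤ σ}),
          h y ≤ ρ - ε - essSup h volume * kappaOne d N K (σ / δ) := by
        rw [ae_iff, Measure.restrict_apply' (KDEAux.ball_meas hN (D i) σ)]
        apply measure_mono_null ?_ hnull
        intro y hy
        simp only [Set.mem_inter_iff, Set.mem_setOf_eq, not_le] at hy
        exact ⟨hsub hy.2, hy.1.le⟩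
      have hupper := KDEAux.kdeP_le_of_ae hN hK hdens hbnd hδ hθpos.le (D i) hae
      have hclose_i := (abs_lt.mp (hclose (D i))).2
      linarith
end
end

section
/- Let ‖·‖ be either the Euclidean norm or the supremum norm on ℝ^d, let c > 0, and let K := c·1_{B_{‖·‖}}, where B_{‖·‖} is the closed unit ball of ‖·‖ (so K is a symmetric kernel up to the normalization constant). For δ > 0 and a subset X ⊆ ℝ^d let 𝒦_δ := { K_δ(x − ·) : x ∈ X }, where K_δ := δ^{−d} K(·/δ). Then there exist constants A > 0 and ν > 0, depending only on d and not on δ, c, or X, such that for every δ > 0, every probability measure Q on ℝ^d, and every ε ∈ (0, δ^{−d} c], the covering numbers satisfy N(𝒦_δ, L₂(Q), ε) ≤ (A δ^{−d} c / ε)^ν. -/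
set_option maxHeartbeats 1000000


open MeasureTheory ENNReal

noncomputable section

/-- The `ε`-covering number of a class `G` of functions on `ℝ^d`, viewed as a subset of
`L₂(P)`: the least number of closed `L₂(P)`-balls of radius `ε` (with arbitrary function
centers) needed to cover `G`; `∞` if no finite cover exists. -/
def covNum (d : ℕ) (P : Measure (Fin d → ℝ)) (G : Set ((Fin d → ℝ) → ℝ)) (ε : ℝ) :
    ℝ≥0∞ :=
  sInf {m : ℝ≥0∞ | ∃ s : Finset ((Fin d → ℝ) → ℝ), (s.card : ℝ≥0∞) = m ∧
    ∀ g ∈ G, ∃ f ∈ s,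
      (∫⁻ x, ENNReal.ofReal ((g x - f x) ^ 2) ∂P) ≤ ENNReal.ofReal (ε ^ 2)}

open Finset



-- sum of binomials bound
lemma sum_choose_le_pow (n K : ℕ) : ∑ j ∈ range (K+1), n.choose j ≤ (n+1)^K := by
  induction K with
  | zero => simp
  | succ K ih =>
    rw [Finset.sum_range_succ, pow_succ]
    have h1 : n.choose (K+1) ≤ n * (n+1)^K := by
      calc n.choose (K+1) ≤ n^(K+1) := Nat.choose_le_pow n (K+1)
        _ = n * n^K := by ring
        _ ≤ n * (n+1)^K := Nat.mul_le_mul_left n (Nat.pow_le_pow_left (Nat.le_succ n) K)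
    calc ∑ j ∈ range (K+1), n.choose j + n.choose (K+1) ≤ (n+1)^K + n * (n+1)^K :=
          Nat.add_le_add ih h1
      _ = (n+1)^K * (n+1) := by ring

lemma not_shatters_of_halfspaces {ι : Type*} [Fintype ι] {n : ℕ} (z : Fin n → ι → ℝ)
    (𝒜 : Finset (Finset (Fin n)))
    (h𝒜 : ∀ A ∈ 𝒜, ∃ w : ι → ℝ, ∀ k, k ∈ A ↔ ∑ c, w c * z k c ≤ 0)
    (s : Finset (Fin n)) (hcard : Fintype.card ι < s.card) : ¬ 𝒜.Shatters s := by
  classical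
  intro hsh
  -- the family (z k)_{k ∈ s} is linearly dependent
  have hnli : ¬ LinearIndependent ℝ (fun k : s => z k.1) := by
    intro hli
    have := hli.fintype_card_le_finrank
    rw [Module.finrank_fintype_fun_eq_card] at this
    simp [Fintype.card_coe] at this
    omega
  obtain ⟨g, hgsum, k₀, hk₀⟩ := Fintype.not_linearIndependent_iff.1 hnli
  -- normalize sign
  set sgn : ℝ := if 0 < g k₀ then 1 else -1 with hsgn
  set lam : Fin n → ℝ := fun k => if h : k ∈ s then sgn * g ⟨k, h⟩ else 0 with hlam
  have hk₀pos : 0 < lam k₀.1 := by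
    rw [hlam]
    simp only [k₀.2, dif_pos]
    rcases lt_trichotomy (g k₀) 0 with h | h | h
    · rw [hsgn, if_neg (by linarith)]; simpa using by nlinarith
    · exact absurd h hk₀
    · rw [hsgn, if_pos h]; simpa [Subtype.coe_eta] using by nlinarith
  have hsum : ∀ c, ∑ k ∈ s, lam k * z k c = 0 := by
    intro c
    have h1 : ∑ k : s, (sgn * g k) * z k.1 c = 0 := by
      have := congrFun hgsum c
      simp only [Finset.sum_apply, Pi.smul_apply, smul_eq_mul, Pi.zero_apply] at this
      calc ∑ k : s, (sgn * g k) * z k.1 c = sgn * ∑ k : s, g k * z k.1 c := by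
            rw [Finset.mul_sum]; congr 1; ext k; ring
        _ = 0 := by rw [this]; ring
    rw [← h1, ← Finset.sum_attach s (fun k => lam k * z k c)]
    apply Finset.sum_congr rfl
    intro k _
    rw [hlam]
    simp [k.2]
  -- shattering gives a halfspace realizing the nonpositive part
  obtain ⟨A, hA𝒜, hA⟩ := hsh (Finset.filter_subset (fun k => lam k ≤ 0) s)
  obtain ⟨w, hw⟩ := h𝒜 A hA𝒜
  have hE0 : ∑ k ∈ s, lam k * (∑ c, w c * z k c) = 0 := by
    calc ∑ k ∈ s, lam k * (∑ c, w c * z k c)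
        = ∑ c, w c * (∑ k ∈ s, lam k * z k c) := by
          simp_rw [Finset.mul_sum]
          rw [Finset.sum_comm]
          apply Finset.sum_congr rfl; intro k _
          apply Finset.sum_congr rfl; intro c _
          ring
      _ = 0 := by simp [hsum]
  have hEpos : 0 < ∑ k ∈ s, lam k * (∑ c, w c * z k c) := by
    apply Finset.sum_pos' ?_ ⟨k₀.1, k₀.2, ?_⟩
    · intro k hk
      by_cases hlk : lam k ≤ 0
      · have hkA : k ∈ A := by
          have : k ∈ s ∩ A := by rw [hA]; exact Finset.mem_filter.2 ⟨hk, hlk⟩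
          exact (Finset.mem_inter.1 this).2
        have := (hw k).1 hkA
        nlinarith
      · push_neg at hlk
        have hkA : k ∉ A := by
          intro hkA
          have : k ∈ s.filter (fun k => lam k ≤ 0) := by
            rw [← hA]; exact Finset.mem_inter.2 ⟨hk, hkA⟩
          have := (Finset.mem_filter.1 this).2
          linarith
        have : ¬ (∑ c, w c * z k c ≤ 0) := fun h => hkA ((hw k).2 h)
        push_neg at this
        nlinarith
    · by_cases hlk : lam k₀.1 ≤ 0
      · linarith
      · push_neg at hlk
        have hkA : k₀.1 ∉ A := by
          intro hkA
          have : k₀.1 ∈ s.filter (fun k => lam k ≤ 0) := by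
            rw [← hA]; exact Finset.mem_inter.2 ⟨k₀.2, hkA⟩
          have := (Finset.mem_filter.1 this).2
          linarith
        have : ¬ (∑ c, w c * z k₀.1 c ≤ 0) := fun h => hkA ((hw k₀.1).2 h)
        push_neg at this
        nlinarith
  linarith

lemma halfspace_trace {ι : Type*} [Fintype ι] {n m : ℕ} (z : Fin n → ι → ℝ)
    (w : Fin m → ι → ℝ)
    (hsep : ∀ i j, i ≠ j → ∃ k, ¬ ((∑ c, w i c * z k c ≤ 0) ↔ (∑ c, w j c * z k c ≤ 0))) :
    m ≤ (n+1)^(Fintype.card ι) := by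
  classical
  set T : Fin m → Finset (Fin n) := fun i => univ.filter (fun k => ∑ c, w i c * z k c ≤ 0)
    with hT
  have hTinj : Function.Injective T := by
    intro i j hij
    by_contra hne
    obtain ⟨k, hk⟩ := hsep i j hne
    apply hk
    constructor
    · intro h
      have : k ∈ T j := by rw [← hij]; simp [hT, h]
      simpa [hT] using this
    · intro h
      have : k ∈ T i := by rw [hij]; simp [hT, h]
      simpa [hT] using this
  set 𝒜 : Finset (Finset (Fin n)) := univ.image T with h𝒜
  have hm : m = 𝒜.card := by
    rw [h𝒜, Finset.card_image_of_injective _ hTinj, card_univ, Fintype.card_fin]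
  have hsh : ∀ s ∈ 𝒜.shatterer, s.card ≤ Fintype.card ι := by
    intro s hs
    rw [Finset.mem_shatterer] at hs
    by_contra hbig
    push_neg at hbig
    have h1 : Fintype.card ι + 1 ≤ s.card := hbig
    obtain ⟨s', hs's, hs'c⟩ := Finset.exists_subset_card_eq h1
    have hsh' : 𝒜.Shatters s' := hs.mono_right hs's
    refine not_shatters_of_halfspaces z 𝒜 ?_ s' (by omega) hsh'
    intro A hA
    rw [h𝒜, Finset.mem_image] at hA
    obtain ⟨i, _, hi⟩ := hA
    exact ⟨w i, fun k => by rw [← hi]; simp [hT]⟩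
  -- count
  have hsub : 𝒜.shatterer ⊆ (range (Fintype.card ι + 1)).biUnion
      (fun j => Finset.powersetCard j (univ : Finset (Fin n))) := by
    intro s hs
    rw [Finset.mem_biUnion]
    exact ⟨s.card, Finset.mem_range.2 (Nat.lt_succ_of_le (hsh s hs)),
      Finset.mem_powersetCard.2 ⟨Finset.subset_univ s, rfl⟩⟩
  calc m = 𝒜.card := hm
    _ ≤ 𝒜.shatterer.card := Finset.card_le_card_shatterer 𝒜
    _ ≤ ((range (Fintype.card ι + 1)).biUnion
        (fun j => Finset.powersetCard j (univ : Finset (Fin n)))).card :=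
        Finset.card_le_card hsub
    _ ≤ ∑ j ∈ range (Fintype.card ι + 1), (Finset.powersetCard j (univ : Finset (Fin n))).card :=
        Finset.card_biUnion_le
    _ = ∑ j ∈ range (Fintype.card ι + 1), n.choose j := by
        apply Finset.sum_congr rfl; intro j _
        rw [Finset.card_powersetCard, card_univ, Fintype.card_fin]
    _ ≤ (n+1)^(Fintype.card ι) := sum_choose_le_pow n _


lemma cube_trace {d n m : ℕ} (δ : ℝ) (x : Fin m → Fin d → ℝ) (v : Fin n → Fin d → ℝ)
    (hsep : ∀ i j, i ≠ j → ∃ k, ¬ ((∀ c, x i c - δ ≤ v k c ∧ v k c ≤ x i c + δ) ↔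
      (∀ c, x j c - δ ≤ v k c ∧ v k c ≤ x j c + δ))) :
    m ≤ (n+1)^(2*d) := by
  classical
  set L : Fin m → Fin d → Finset (Fin n) :=
    fun i c => univ.filter (fun k => x i c - δ ≤ v k c) with hL
  set U : Fin m → Fin d → Finset (Fin n) :=
    fun i c => univ.filter (fun k => v k c ≤ x i c + δ) with hU
  have hcard : ∀ i c, (L i c).card ≤ n ∧ (U i c).card ≤ n := by
    intro i c
    constructor <;>
      simpa using Nat.le_trans (Finset.card_filter_le _ _) (by simp)
  set enc : Fin m → (Fin d → Fin (n+1) × Fin (n+1)) := fun i c =>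
    (⟨(L i c).card, Nat.lt_succ_of_le (hcard i c).1⟩,
     ⟨(U i c).card, Nat.lt_succ_of_le (hcard i c).2⟩) with henc
  have hLchain : ∀ i j c, L i c ⊆ L j c ∨ L j c ⊆ L i c := by
    intro i j c
    rcases le_total (x i c) (x j c) with h | h
    · right; intro k hk; simp only [hL, Finset.mem_filter, Finset.mem_univ, true_and] at hk ⊢
      linarith
    · left; intro k hk; simp only [hL, Finset.mem_filter, Finset.mem_univ, true_and] at hk ⊢
      linarith
  have hUchain : ∀ i j c, U i c ⊆ U j c ∨ U j c ⊆ U i c := by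
    intro i j c
    rcases le_total (x i c) (x j c) with h | h
    · left; intro k hk; simp only [hU, Finset.mem_filter, Finset.mem_univ, true_and] at hk ⊢
      linarith
    · right; intro k hk; simp only [hU, Finset.mem_filter, Finset.mem_univ, true_and] at hk ⊢
      linarith
  have hencinj : Function.Injective enc := by
    intro i j hij
    by_contra hne
    obtain ⟨k, hk⟩ := hsep i j hne
    apply hk
    have hLeq : ∀ c, L i c = L j c := by
      intro c
      have hc : (L i c).card = (L j c).card := by
        have := congrFun hij c
        simpa [henc, Prod.ext_iff, Fin.ext_iff] using (congrArg Prod.fst this)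
      rcases hLchain i j c with h | h
      · exact Finset.eq_of_subset_of_card_le h (le_of_eq hc.symm)
      · exact (Finset.eq_of_subset_of_card_le h (le_of_eq hc)).symm
    have hUeq : ∀ c, U i c = U j c := by
      intro c
      have hc : (U i c).card = (U j c).card := by
        have := congrFun hij c
        simpa [henc, Prod.ext_iff, Fin.ext_iff] using (congrArg Prod.snd this)
      rcases hUchain i j c with h | h
      · exact Finset.eq_of_subset_of_card_le h (le_of_eq hc.symm)
      · exact (Finset.eq_of_subset_of_card_le h (le_of_eq hc)).symm
    constructor
    · intro h c
      have h1 : k ∈ L j c := by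
        rw [← hLeq]
        simp only [hL, Finset.mem_filter, Finset.mem_univ, true_and]; exact (h c).1
      have h2 : k ∈ U j c := by
        rw [← hUeq]
        simp only [hU, Finset.mem_filter, Finset.mem_univ, true_and]; exact (h c).2
      simp only [hL, Finset.mem_filter, Finset.mem_univ, true_and] at h1
      simp only [hU, Finset.mem_filter, Finset.mem_univ, true_and] at h2
      exact ⟨h1, h2⟩
    · intro h c
      have h1 : k ∈ L i c := by
        rw [hLeq]
        simp only [hL, Finset.mem_filter, Finset.mem_univ, true_and]; exact (h c).1
      have h2 : k ∈ U i c := by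
        rw [hUeq]
        simp only [hU, Finset.mem_filter, Finset.mem_univ, true_and]; exact (h c).2
      simp only [hL, Finset.mem_filter, Finset.mem_univ, true_and] at h1
      simp only [hU, Finset.mem_filter, Finset.mem_univ, true_and] at h2
      exact ⟨h1, h2⟩
  have := Fintype.card_le_of_injective enc hencinj
  simpa [Fintype.card_fun, two_mul, pow_add, mul_pow] using this


lemma exists_good_sample {α : Type*} [MeasurableSpace α] (Q : Measure α)
    [IsProbabilityMeasure Q] {m : ℕ} (S : Fin m → Set α) (hS : ∀ i, MeasurableSet (S i))
    {θ : ℝ} (hθ0 : 0 ≤ θ) (hθ1 : θ ≤ 1)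
    (hsep : ∀ i j, i ≠ j → ENNReal.ofReal θ < Q (symmDiff (S i) (S j)))
    (n : ℕ) (hn : (m:ℝ)^2 * (1-θ)^n < 1) :
    ∃ ω : Fin n → α, ∀ i j, i ≠ j → ∃ k, ω k ∈ symmDiff (S i) (S j) := by
  classical
  set Qn : Measure (Fin n → α) := Measure.pi (fun _ => Q) with hQn
  haveI : IsProbabilityMeasure Qn := by rw [hQn]; infer_instance
  set Bad : Fin m → Fin m → Set (Fin n → α) := fun i j =>
    if i = j then ∅ else {ω | ∀ k, ω k ∉ symmDiff (S i) (S j)} with hBad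
  have hΔmeas : ∀ i j, MeasurableSet (symmDiff (S i) (S j)) :=
    fun i j => (hS i).symmDiff (hS j)
  have hBadQ : ∀ i j, Qn (Bad i j) ≤ ENNReal.ofReal ((1-θ)^n) := by
    intro i j
    by_cases hij : i = j
    · simp [hBad, hij]
    · have hset : Bad i j = Set.pi Set.univ (fun _ : Fin n => (symmDiff (S i) (S j))ᶜ) := by
        rw [hBad]; simp only [if_neg hij]
        ext ω; simp only [Set.mem_setOf_eq, Set.mem_univ_pi, Set.mem_compl_iff]
      rw [hset, hQn, Measure.pi_pi]
      have h1 : Q (symmDiff (S i) (S j))ᶜ ≤ ENNReal.ofReal (1-θ) := by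
        rw [prob_compl_eq_one_sub (hΔmeas i j)]
        have h2 : ENNReal.ofReal θ ≤ Q (symmDiff (S i) (S j)) := (hsep i j hij).le
        rw [ENNReal.ofReal_sub 1 hθ0]
        simp only [ENNReal.ofReal_one]
        exact tsub_le_tsub_left h2 1
      calc ∏ _k : Fin n, Q (symmDiff (S i) (S j))ᶜ
          ≤ ∏ _k : Fin n, ENNReal.ofReal (1-θ) := Finset.prod_le_prod' (fun _ _ => h1)
        _ = (ENNReal.ofReal (1-θ))^n := by rw [Finset.prod_const]; simp
        _ = ENNReal.ofReal ((1-θ)^n) := (ENNReal.ofReal_pow (by linarith) n).symm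
  by_contra hcon
  push_neg at hcon
  have hcover : (Set.univ : Set (Fin n → α)) ⊆ ⋃ i, ⋃ j, Bad i j := by
    intro ω _
    obtain ⟨i, j, hij, hk⟩ := hcon ω
    refine Set.mem_iUnion.2 ⟨i, Set.mem_iUnion.2 ⟨j, ?_⟩⟩
    rw [hBad]
    simp only [if_neg hij]
    intro k
    exact hk k
  have h1le : (1 : ℝ≥0∞) ≤ Qn (⋃ i, ⋃ j, Bad i j) := by
    rw [← measure_univ (μ := Qn)]
    exact measure_mono hcover
  have hub : Qn (⋃ i, ⋃ j, Bad i j) ≤ (m : ℝ≥0∞) * ((m : ℝ≥0∞) * ENNReal.ofReal ((1-θ)^n)) := by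
    calc Qn (⋃ i, ⋃ j, Bad i j) ≤ ∑ i : Fin m, Qn (⋃ j, Bad i j) :=
          measure_iUnion_fintype_le _ _
      _ ≤ ∑ i : Fin m, ∑ j : Fin m, Qn (Bad i j) :=
          Finset.sum_le_sum (fun i _ => measure_iUnion_fintype_le _ _)
      _ ≤ ∑ _i : Fin m, ∑ _j : Fin m, ENNReal.ofReal ((1-θ)^n) :=
          Finset.sum_le_sum (fun i _ => Finset.sum_le_sum (fun j _ => hBadQ i j))
      _ = (m : ℝ≥0∞) * ((m : ℝ≥0∞) * ENNReal.ofReal ((1-θ)^n)) := by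
          simp [Finset.sum_const, mul_comm, mul_assoc]
  have hlt : (m : ℝ≥0∞) * ((m : ℝ≥0∞) * ENNReal.ofReal ((1-θ)^n)) < 1 := by
    have : (m : ℝ≥0∞) * ((m : ℝ≥0∞) * ENNReal.ofReal ((1-θ)^n))
        = ENNReal.ofReal ((m:ℝ)^2 * (1-θ)^n) := by
      rw [ENNReal.ofReal_mul (by positivity), ← ENNReal.ofReal_natCast m]
      rw [show ((m:ℝ)^2) = (m:ℝ) * (m:ℝ) by ring, ENNReal.ofReal_mul (by positivity)]
      ring
    rw [this]
    exact ENNReal.ofReal_lt_one.2 hn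
  exact absurd (lt_of_le_of_lt (le_trans h1le hub) hlt) (lt_irrefl _)

lemma covNum_le_of_packing {d : ℕ} (P : Measure (Fin d → ℝ)) (G : Set ((Fin d → ℝ) → ℝ))
    (ε : ℝ) (B : ℕ)
    (hB : ∀ (m : ℕ) (g : Fin m → ((Fin d → ℝ) → ℝ)), (∀ i, g i ∈ G) →
      (∀ i j, i ≠ j →
        ENNReal.ofReal (ε^2) < ∫⁻ x, ENNReal.ofReal ((g i x - g j x)^2) ∂P) →
      m ≤ B) :
    covNum d P G ε ≤ (B : ℝ≥0∞) := by
  classical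
  set Pk : Set ℕ := {m | ∃ g : Fin m → ((Fin d → ℝ) → ℝ), (∀ i, g i ∈ G) ∧
    (∀ i j, i ≠ j → ENNReal.ofReal (ε^2) < ∫⁻ x, ENNReal.ofReal ((g i x - g j x)^2) ∂P)}
    with hPk
  have h0 : 0 ∈ Pk := ⟨Fin.elim0, fun i => i.elim0, fun i => i.elim0⟩
  have hbdd : BddAbove Pk := ⟨B, fun k ⟨g, hg, hsep⟩ => hB k g hg hsep⟩
  set mm := sSup Pk with hmm
  obtain ⟨g, hgG, hgsep⟩ : mm ∈ Pk := Nat.sSup_mem ⟨0, h0⟩ hbdd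
  set s : Finset ((Fin d → ℝ) → ℝ) := Finset.univ.image g with hs
  have hcov : ∀ h ∈ G, ∃ f ∈ s,
      (∫⁻ x, ENNReal.ofReal ((h x - f x) ^ 2) ∂P) ≤ ENNReal.ofReal (ε ^ 2) := by
    intro h hh
    by_contra hno
    push_neg at hno
    have hno' : ∀ i, ENNReal.ofReal (ε^2) < ∫⁻ x, ENNReal.ofReal ((h x - g i x)^2) ∂P := by
      intro i
      have := hno (g i) (Finset.mem_image_of_mem g (Finset.mem_univ i))
      exact this
    set g' : Fin (mm+1) → ((Fin d → ℝ) → ℝ) := Fin.snoc g h with hg'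
    have hsnoc_last : g' (Fin.last mm) = h := by rw [hg']; simp
    have hsnoc_cast : ∀ i : Fin mm, g' i.castSucc = g i := by
      intro i; rw [hg']; simp
    have hmem : mm + 1 ∈ Pk := by
      refine ⟨g', fun i => ?_, fun i j hij => ?_⟩
      · rcases Fin.eq_castSucc_or_eq_last i with ⟨i', rfl⟩ | rfl
        · rw [hsnoc_cast]; exact hgG i'
        · rw [hsnoc_last]; exact hh
      · rcases Fin.eq_castSucc_or_eq_last i with ⟨i', rfl⟩ | rfl <;>
          rcases Fin.eq_castSucc_or_eq_last j with ⟨j', rfl⟩ | rfl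
        · rw [hsnoc_cast, hsnoc_cast]
          exact hgsep i' j' (fun hc => hij (by rw [hc]))
        · rw [hsnoc_cast, hsnoc_last]
          have heq : (∫⁻ x, ENNReal.ofReal ((g i' x - h x)^2) ∂P)
              = ∫⁻ x, ENNReal.ofReal ((h x - g i' x)^2) ∂P :=
            lintegral_congr (fun x => by rw [show (g i' x - h x)^2 = (h x - g i' x)^2 by ring])
          rw [heq]; exact hno' i'
        · rw [hsnoc_cast, hsnoc_last]
          exact hno' j'
        · exact absurd rfl hij
    have := le_csSup hbdd hmem
    omega
  have hmem : ((s.card : ℝ≥0∞)) ∈ {m : ℝ≥0∞ | ∃ s' : Finset ((Fin d → ℝ) → ℝ),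
      (s'.card : ℝ≥0∞) = m ∧ ∀ g ∈ G, ∃ f ∈ s',
      (∫⁻ x, ENNReal.ofReal ((g x - f x) ^ 2) ∂P) ≤ ENNReal.ofReal (ε ^ 2)} :=
    ⟨s, rfl, hcov⟩
  calc covNum d P G ε ≤ (s.card : ℝ≥0∞) := sInf_le hmem
    _ ≤ (mm : ℝ≥0∞) := by
        rw [hs]
        exact_mod_cast le_trans (Finset.card_image_le) (by simp)
    _ ≤ (B : ℝ≥0∞) := by
        exact_mod_cast hB mm g hgG hgsep


lemma lint_sub_indicator {α : Type*} [MeasurableSpace α] (Q : Measure α) (P₁ P₂ : α → Prop)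
    [DecidablePred P₁] [DecidablePred P₂]
    (hS : MeasurableSet {y | P₁ y}) (hT : MeasurableSet {y | P₂ y}) (M : ℝ) :
    ∫⁻ y, ENNReal.ofReal (((if P₁ y then M else 0) - (if P₂ y then M else 0))^2) ∂Q
      = ENNReal.ofReal (M^2) * Q (symmDiff {y | P₁ y} {y | P₂ y}) := by
  have hfun : (fun y => ENNReal.ofReal (((if P₁ y then M else 0) - (if P₂ y then M else 0))^2))
      = (symmDiff {y | P₁ y} {y | P₂ y}).indicator (fun _ => ENNReal.ofReal (M^2)) := by
    funext y
    by_cases h1 : P₁ y <;> by_cases h2 : P₂ y <;>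
      simp [Set.indicator_apply, Set.mem_symmDiff, h1, h2]
  rw [hfun, lintegral_indicator_const (hS.symmDiff hT)]

lemma arith_bound {D : ℕ} (hD : 1 ≤ D) {θ L mR : ℝ} (hθ0 : 0 < θ) (hθ1 : θ ≤ 1)
    (hL : 0 < L) (hmR : mR = Real.exp L) (h : mR ≤ ((2*L+2)/θ)^D) :
    mR ≤ (4*D/θ)^(2*D) := by
  have hD0 : (0:ℝ) < D := by exact_mod_cast hD
  have hD1 : (1:ℝ) ≤ D := by exact_mod_cast hD
  set a : ℝ := Real.exp (L / (2*D)) with ha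
  have ha0 : 0 < a := Real.exp_pos _
  have hapow : a^(2*D) = mR := by
    rw [ha, ← Real.exp_nat_mul, hmR]
    congr 1
    push_cast
    field_simp
  have hb0 : 0 < (2*L+2)/θ := by positivity
  have hsq : a^2 ≤ (2*L+2)/θ := by
    by_contra hcon
    push_neg at hcon
    have h2 : ((2*L+2)/θ)^D < (a^2)^D := by
      apply pow_lt_pow_left₀ hcon (le_of_lt hb0)
      omega
    rw [← pow_mul] at h2
    linarith [h, h2, hapow.ge, hapow.le]
  have hlow : (2*L+2)/(4*D) ≤ a := by
    have h1 : 1 + L/(2*D) ≤ a := by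
      rw [ha]
      linarith [Real.add_one_le_exp (L/(2*D))]
    have h2 : (2*L+2)/(4*D) ≤ 1 + L/(2*D) := by
      rw [div_le_iff₀ (by positivity)]
      have : (1 + L/(2*D)) * (4*D) = 4*D + 2*L := by field_simp; ring
      rw [this]
      linarith [hD1]
    linarith
  have hlow0 : 0 < (2*L+2)/(4*D) := by positivity
  have hkey : a ≤ 4*D/θ := by
    have h1 : a * ((2*L+2)/(4*D)) ≤ a * a := by
      apply mul_le_mul_of_nonneg_left hlow (le_of_lt ha0)
    have h2 : a * a ≤ (2*L+2)/θ := by rw [← sq]; exact hsq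
    have h3 : a * ((2*L+2)/(4*D)) ≤ (2*L+2)/θ := le_trans h1 h2
    rw [← le_div_iff₀ hlow0] at h3
    calc a ≤ (2*L+2)/θ / ((2*L+2)/(4*D)) := h3
      _ = 4*D/θ := by
          field_simp
  calc mR = a^(2*D) := hapow.symm
    _ ≤ (4*D/θ)^(2*D) := pow_le_pow_left₀ (le_of_lt ha0) hkey _


lemma char_sup {d : ℕ} {δ : ℝ} (hδ : 0 < δ) (xx y : Fin d → ℝ) :
    (‖δ⁻¹ • (xx - y)‖ ≤ 1) ↔ ∀ c, xx c - δ ≤ y c ∧ y c ≤ xx c + δ := by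
  rw [pi_norm_le_iff_of_nonneg zero_le_one]
  have hcoord : ∀ c, ‖(δ⁻¹ • (xx - y)) c‖ = |xx c - y c| / δ := by
    intro c
    simp only [Pi.smul_apply, Pi.sub_apply, smul_eq_mul, Real.norm_eq_abs, abs_mul, abs_inv,
      abs_of_pos hδ]
    rw [inv_mul_eq_div]
  constructor
  · intro h c
    have := h c
    rw [hcoord c, div_le_one hδ, abs_le] at this
    constructor <;> linarith [this.1, this.2]
  · intro h c
    rw [hcoord c, div_le_one hδ, abs_le]
    constructor <;> linarith [(h c).1, (h c).2]

lemma char_euc {d : ℕ} {δ : ℝ} (hδ : 0 < δ) (xx y : Fin d → ℝ) :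
    (Real.sqrt (∑ i, ((δ⁻¹ • (xx - y)) i)^2) ≤ 1) ↔ ∑ i, (xx i - y i)^2 ≤ δ^2 := by
  have hδ2 : (0:ℝ) < δ^2 := by positivity
  have hsum : ∑ i, ((δ⁻¹ • (xx - y)) i)^2 = δ⁻¹^2 * ∑ i, (xx i - y i)^2 := by
    rw [Finset.mul_sum]
    apply Finset.sum_congr rfl
    intro i _
    simp only [Pi.smul_apply, Pi.sub_apply, smul_eq_mul]
    ring
  have hS : (0:ℝ) ≤ ∑ i, (xx i - y i)^2 := Finset.sum_nonneg (fun i _ => sq_nonneg _)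
  have harg : (0:ℝ) ≤ ∑ i, ((δ⁻¹ • (xx - y)) i)^2 := Finset.sum_nonneg (fun i _ => sq_nonneg _)
  have hid : δ^2 * δ⁻¹^2 = 1 := by field_simp
  constructor
  · intro h
    have h1 : ∑ i, ((δ⁻¹ • (xx - y)) i)^2 ≤ 1 := by
      nlinarith [Real.sq_sqrt harg, Real.sqrt_nonneg (∑ i, ((δ⁻¹ • (xx - y)) i)^2)]
    rw [hsum] at h1
    nlinarith [mul_le_mul_of_nonneg_left h1 hδ2.le]
  · intro h
    have h1 : ∑ i, ((δ⁻¹ • (xx - y)) i)^2 ≤ 1 := by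
      rw [hsum]
      nlinarith [mul_le_mul_of_nonneg_left h (by positivity : (0:ℝ) ≤ δ⁻¹^2)]
    calc Real.sqrt (∑ i, ((δ⁻¹ • (xx - y)) i)^2) ≤ Real.sqrt 1 := Real.sqrt_le_sqrt h1
      _ = 1 := Real.sqrt_one

lemma euc_halfspace {d : ℕ} (xx yy : Fin d → ℝ) (δ : ℝ) :
    ((∑ c, (xx c - yy c)^2 ≤ δ^2) ↔
      ∑ cc : Fin d ⊕ Fin 2,
        (Sum.elim (fun c => -2 * xx c)
          (fun j => if j = 0 then 1 else (∑ c, (xx c)^2) - δ^2)) cc *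
        (Sum.elim (fun c => yy c) (fun j => if j = 0 then ∑ c, (yy c)^2 else 1)) cc ≤ 0) := by
  rw [Fintype.sum_sum_type]
  have h2 : ∑ j : Fin 2,
      (Sum.elim (fun c => -2 * xx c)
          (fun j => if j = 0 then 1 else (∑ c, (xx c)^2) - δ^2)) (Sum.inr j) *
        (Sum.elim (fun c => yy c) (fun j => if j = 0 then ∑ c, (yy c)^2 else 1)) (Sum.inr j)
      = (∑ c, (yy c)^2) + ((∑ c, (xx c)^2) - δ^2) := by
    rw [Fin.sum_univ_two]
    norm_num
  rw [h2]
  simp only [Sum.elim_inl]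
  have hexp : ∑ c, (xx c - yy c)^2
      = (∑ c, (-2 * xx c) * yy c) + ((∑ c, (yy c)^2) + (∑ c, (xx c)^2)) := by
    rw [← Finset.sum_add_distrib, ← Finset.sum_add_distrib]
    apply Finset.sum_congr rfl
    intro c _
    ring
  constructor <;> intro h <;> linarith [hexp.le, hexp.ge]
/-- Let `‖·‖` be either the supremum norm (the default norm of
`Fin d → ℝ`) or the Euclidean norm on `ℝ^d`, `c > 0`, and `K := c·1_{B_{‖·‖}}` the
multiple of the indicator of the closed unit ball.  For `δ > 0` and `X ⊆ ℝ^d` let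
`𝒦_δ := { K_δ(x − ·) : x ∈ X }` with `K_δ := δ^{−d} K(·/δ)`.  Then there are constants
`A, ν > 0` depending only on `d` (not on `δ`, `c`, or `X`) such that for every `δ > 0`,
every probability measure `Q` on `ℝ^d`, and every `ε ∈ (0, δ^{−d} c]`,
`N(𝒦_δ, L₂(Q), ε) ≤ (A δ^{−d} c / ε)^ν`. -/
theorem covNum_ball_indicator_kernel {d : ℕ} (hd : 0 < d)
    (N : (Fin d → ℝ) → ℝ)
    (hN : (∀ x, N x = ‖x‖) ∨ (∀ x, N x = Real.sqrt (∑ i, (x i) ^ 2))) :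
    ∃ A ν : ℝ, 0 < A ∧ 0 < ν ∧
      ∀ (c : ℝ), 0 < c → ∀ (X : Set (Fin d → ℝ)) (δ : ℝ), 0 < δ →
        ∀ (Q : Measure (Fin d → ℝ)), IsProbabilityMeasure Q →
          ∀ ε : ℝ, 0 < ε → ε ≤ (δ ^ d)⁻¹ * c →
            covNum d Q
                {f | ∃ x ∈ X,
                  f = fun y => (δ ^ d)⁻¹ * (if N (δ⁻¹ • (x - y)) ≤ 1 then c else 0)} ε ≤
              ENNReal.ofReal ((A * ((δ ^ d)⁻¹ * c) / ε) ^ ν) := by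
  classical
  refine ⟨((4*d+4 : ℕ) : ℝ), ((8*d+8 : ℕ) : ℝ), by positivity, by positivity, ?_⟩
  intro c hc X δ hδ Q hQ ε hε hεM
  haveI := hQ
  set AR : ℝ := ((4*d+4 : ℕ) : ℝ) with hAR
  set M : ℝ := (δ ^ d)⁻¹ * c with hM
  have hM0 : 0 < M := by rw [hM]; positivity
  set θ : ℝ := (ε / M)^2 with hθ
  have hθ0 : 0 < θ := by rw [hθ]; positivity
  have hθ1 : θ ≤ 1 := by
    rw [hθ]
    apply pow_le_one₀ (by positivity)
    rw [div_le_one hM0]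
    exact hεM
  set D : ℕ := 2*d+2 with hD
  have hD1R : (1:ℝ) ≤ (D:ℝ) := by exact_mod_cast (by omega : 1 ≤ D)
  set T : ℝ := (AR * M / ε) ^ (8*d+8) with hT
  have hbase1 : (1:ℝ) ≤ AR * M / ε := by
    rw [hAR]
    rw [mul_div_assoc]
    calc (1:ℝ) = 1 * 1 := by ring
      _ ≤ ((4*d+4 : ℕ) : ℝ) * (M / ε) := by
          apply mul_le_mul
          · exact_mod_cast (by omega : 1 ≤ 4*d+4)
          · rw [le_div_iff₀ hε]; linarith
          · norm_num
          · positivity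
  have hT1 : (1:ℝ) ≤ T := by rw [hT]; exact one_le_pow₀ hbase1
  have hT0 : (0:ℝ) ≤ T := by linarith
  -- continuity and measurability of the norm
  have hNcont : Continuous N := by
    rcases hN with h | h
    · have : N = fun x => ‖x‖ := funext h
      rw [this]; exact continuous_norm
    · have : N = fun x => Real.sqrt (∑ i, (x i)^2) := funext h
      rw [this]
      exact Real.continuous_sqrt.comp
        (continuous_finset_sum _ (fun i _ => (continuous_apply i).pow 2))
  refine le_trans (covNum_le_of_packing Q _ ε ⌊T⌋₊ ?_) ?_
  · -- packing bound
    intro m g hg hsep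
    rw [Nat.le_floor_iff hT0]
    choose x hxX hgx using hg
    set Bs : Fin m → Set (Fin d → ℝ) := fun i => {y | N (δ⁻¹ • (x i - y)) ≤ 1} with hBs
    have hBmeas : ∀ i, MeasurableSet (Bs i) := by
      intro i
      have hf : Measurable (fun y : Fin d → ℝ => N (δ⁻¹ • (x i - y))) :=
        (hNcont.comp ((continuous_const.sub continuous_id).const_smul δ⁻¹)).measurable
      exact measurableSet_le hf measurable_const
    have hpt : ∀ i j y, (g i y - g j y)^2 =
        ((if N (δ⁻¹ • (x i - y)) ≤ 1 then M else 0)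
          - (if N (δ⁻¹ • (x j - y)) ≤ 1 then M else 0))^2 := by
      intro i j y
      rw [hgx i, hgx j]
      simp only [mul_ite, mul_zero]
      rw [hM]
    have hint : ∀ i j, (∫⁻ y, ENNReal.ofReal ((g i y - g j y)^2) ∂Q)
        = ENNReal.ofReal (M^2) * Q (symmDiff (Bs i) (Bs j)) := by
      intro i j
      rw [lintegral_congr (fun y => congrArg ENNReal.ofReal (hpt i j y))]
      exact lint_sub_indicator Q _ _ (hBmeas i) (hBmeas j) M
    have hdist : ∀ i j, i ≠ j → ENNReal.ofReal θ < Q (symmDiff (Bs i) (Bs j)) := by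
      intro i j hij
      by_contra hle
      push_neg at hle
      have h1 := hsep i j hij
      rw [hint i j] at h1
      have h2 : ENNReal.ofReal (M^2) * Q (symmDiff (Bs i) (Bs j))
          ≤ ENNReal.ofReal (M^2) * ENNReal.ofReal θ := mul_le_mul_right hle _
      rw [← ENNReal.ofReal_mul (by positivity)] at h2
      have h3 : M^2 * θ = ε^2 := by
        rw [hθ]
        field_simp
      rw [h3] at h2
      exact absurd (lt_of_lt_of_le h1 h2) (lt_irrefl _)
    by_cases hm2 : m ≤ 1
    · calc (m:ℝ) ≤ 1 := by exact_mod_cast hm2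
        _ ≤ T := hT1
    · push_neg at hm2
      have hmpos : (0:ℝ) < m := by positivity
      have hm1R : (1:ℝ) < m := by exact_mod_cast hm2
      set L : ℝ := Real.log m with hL
      have hL0 : 0 < L := Real.log_pos hm1R
      set n : ℕ := ⌊2*L/θ⌋₊ + 1 with hn
      have hnθ : 2*L < n * θ := by
        have h1 : 2*L/θ < n := by
          rw [hn]
          push_cast
          exact Nat.lt_floor_add_one _
        calc 2*L = (2*L/θ) * θ := by field_simp
          _ < n * θ := by apply mul_lt_mul_of_pos_right h1 hθ0
      have hsmall : (m:ℝ)^2 * (1-θ)^n < 1 := by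
        have h1θ : (0:ℝ) ≤ 1 - θ := by linarith
        have hexp : (1-θ)^n ≤ Real.exp (-θ) ^ n := by
          apply pow_le_pow_left₀ h1θ
          linarith [Real.add_one_le_exp (-θ)]
        have hm2e : (m:ℝ)^2 = Real.exp L ^ 2 := by rw [hL, Real.exp_log hmpos]
        calc (m:ℝ)^2 * (1-θ)^n ≤ Real.exp L ^ 2 * Real.exp (-θ) ^ n := by
              rw [hm2e]
              apply mul_le_mul_of_nonneg_left hexp (by positivity)
          _ = Real.exp (L + L + n * (-θ)) := by
              rw [Real.exp_add, Real.exp_add, Real.exp_nat_mul, pow_two]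
          _ < 1 := by
              rw [show (1:ℝ) = Real.exp 0 by simp]
              apply Real.exp_lt_exp.2
              have hr : (n:ℝ) * (-θ) = -((n:ℝ)*θ) := by ring
              rw [hr]
              linarith
      obtain ⟨ω, hω⟩ := exists_good_sample Q Bs hBmeas hθ0.le hθ1 hdist n hsmall
      -- geometric trace bound: m ≤ (n+1)^D
      have htrace : m ≤ (n+1)^D := by
        rcases hN with hNs | hNe
        · -- sup norm case
          have hm' : m ≤ (n+1)^(2*d) := by
            apply cube_trace δ x ω
            intro i j hij
            obtain ⟨k, hk⟩ := hω i j hij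
            refine ⟨k, fun hiff => ?_⟩
            rw [Set.mem_symmDiff] at hk
            have hi : (ω k ∈ Bs i) ↔ ∀ c', x i c' - δ ≤ ω k c' ∧ ω k c' ≤ x i c' + δ := by
              rw [hBs]
              simp only [Set.mem_setOf_eq, hNs]
              exact char_sup hδ (x i) (ω k)
            have hj : (ω k ∈ Bs j) ↔ ∀ c', x j c' - δ ≤ ω k c' ∧ ω k c' ≤ x j c' + δ := by
              rw [hBs]
              simp only [Set.mem_setOf_eq, hNs]
              exact char_sup hδ (x j) (ω k)
            rcases hk with ⟨h1, h2⟩ | ⟨h1, h2⟩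
            · exact h2 (hj.2 (hiff.1 (hi.1 h1)))
            · exact h2 (hi.2 (hiff.2 (hj.1 h1)))
          calc m ≤ (n+1)^(2*d) := hm'
            _ ≤ (n+1)^D := Nat.pow_le_pow_right (by omega) (by omega)
        · -- euclidean case
          set z : Fin n → (Fin d ⊕ Fin 2) → ℝ := fun k =>
            Sum.elim (fun c' => ω k c') (fun j => if j = 0 then ∑ c', (ω k c')^2 else 1) with hz
          set w : Fin m → (Fin d ⊕ Fin 2) → ℝ := fun i =>
            Sum.elim (fun c' => -2 * x i c')
              (fun j => if j = 0 then 1 else (∑ c', (x i c')^2) - δ^2) with hw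
          have hiff : ∀ i k, (ω k ∈ Bs i) ↔ (∑ cc, w i cc * z k cc ≤ 0) := by
            intro i k
            have h1 : (ω k ∈ Bs i) ↔ ∑ c', (x i c' - ω k c')^2 ≤ δ^2 := by
              rw [hBs]
              simp only [Set.mem_setOf_eq, hNe]
              exact char_euc hδ (x i) (ω k)
            rw [h1, hz, hw]
            exact euc_halfspace (x i) (ω k) δ
          have hm' : m ≤ (n+1)^(Fintype.card (Fin d ⊕ Fin 2)) := by
            apply halfspace_trace z w
            intro i j hij
            obtain ⟨k, hk⟩ := hω i j hij
            refine ⟨k, fun hiffc => ?_⟩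
            rw [Set.mem_symmDiff] at hk
            rcases hk with ⟨h1, h2⟩ | ⟨h1, h2⟩
            · exact h2 ((hiff j k).2 (hiffc.1 ((hiff i k).1 h1)))
            · exact h2 ((hiff i k).2 (hiffc.2 ((hiff j k).1 h1)))
          have hcard : Fintype.card (Fin d ⊕ Fin 2) = d + 2 := by simp
          rw [hcard] at hm'
          calc m ≤ (n+1)^(d+2) := hm'
            _ ≤ (n+1)^D := Nat.pow_le_pow_right (by omega) (by omega)
      -- numeric conclusion
      have htraceR : (m:ℝ) ≤ ((n+1:ℕ):ℝ)^D := by exact_mod_cast htrace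
      have hn1R : ((n+1:ℕ):ℝ) ≤ (2*L+2)/θ := by
        have h1 : ((n:ℕ):ℝ) = (⌊2*L/θ⌋₊ : ℝ) + 1 := by rw [hn]; push_cast; ring
        have h2 : (⌊2*L/θ⌋₊ : ℝ) ≤ 2*L/θ := Nat.floor_le (by positivity)
        have h3 : (2:ℝ) ≤ 2/θ := by
          rw [le_div_iff₀ hθ0]; linarith
        have h4 : 2*L/θ + 2/θ = (2*L+2)/θ := by field_simp
        push_cast
        push_cast at h1
        rw [h1]
        calc (⌊2*L/θ⌋₊ : ℝ) + 1 + 1 ≤ 2*L/θ + 2 := by linarith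
          _ ≤ 2*L/θ + 2/θ := by linarith
          _ = (2*L+2)/θ := h4
      have hmain : (m:ℝ) ≤ ((2*L+2)/θ)^D := by
        calc (m:ℝ) ≤ ((n+1:ℕ):ℝ)^D := htraceR
          _ ≤ ((2*L+2)/θ)^D := pow_le_pow_left₀ (by positivity) hn1R D
      have harith : (m:ℝ) ≤ (4*(D:ℝ)/θ)^(2*D) :=
        arith_bound (by omega) hθ0 hθ1 hL0 (by rw [hL, Real.exp_log hmpos]) hmain
      -- compare with T
      have hDcast : (D:ℝ) = 2*(d:ℝ)+2 := by rw [hD]; push_cast; ring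
      have hARD : AR = 2*(D:ℝ) := by rw [hAR, hDcast]; push_cast; ring
      have hstep : 4*(D:ℝ)/θ ≤ (AR * M / ε)^2 := by
        have hLeq : 4*(D:ℝ)/θ = (4*(D:ℝ)*M^2) * (ε^2)⁻¹ := by
          rw [hθ]
          field_simp
        have hReq : (AR * M / ε)^2 = (AR^2*M^2) * (ε^2)⁻¹ := by
          rw [div_pow, mul_pow, div_eq_mul_inv]
        rw [hLeq, hReq]
        have hnum : 4*(D:ℝ)*M^2 ≤ AR^2 * M^2 := by
          apply mul_le_mul_of_nonneg_right ?_ (sq_nonneg M)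
          rw [hARD]
          have h4 : (2*(D:ℝ))^2 = 4*(D:ℝ)*(D:ℝ) := by ring
          rw [h4]
          have h5 := mul_le_mul_of_nonneg_left hD1R (by positivity : (0:ℝ) ≤ 4*(D:ℝ))
          calc 4*(D:ℝ) = 4*(D:ℝ)*1 := by ring
            _ ≤ 4*(D:ℝ)*(D:ℝ) := h5
        exact mul_le_mul_of_nonneg_right hnum (by positivity)
      have hfinal : (4*(D:ℝ)/θ)^(2*D) ≤ T := by
        rw [hT]
        have h1 : (4*(D:ℝ)/θ)^(2*D) ≤ ((AR*M/ε)^2)^(2*D) :=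
          pow_le_pow_left₀ (by positivity) hstep _
        rw [← pow_mul] at h1
        have h2 : 2*(2*D) = 8*d+8 := by omega
        rwa [h2] at h1
      linarith
  · -- floor ≤ ofReal T
    rw [← Real.rpow_natCast (AR * M / ε) (8*d+8)] at hT
    have hgoal : ENNReal.ofReal ((AR * M / ε) ^ (((8*d+8:ℕ):ℝ))) = ENNReal.ofReal T := by
      rw [hT]
    rw [hgoal]
    calc (⌊T⌋₊ : ℝ≥0∞) = ENNReal.ofReal (⌊T⌋₊ : ℝ) := (ENNReal.ofReal_natCast _).symm
      _ ≤ ENNReal.ofReal T := ENNReal.ofReal_le_ofReal (Nat.floor_le hT0)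
end
end

section
/- Let K : ℝ^d → [0,∞) be a symmetric kernel that is α-Hölder continuous with respect to a norm ‖·‖ on ℝ^d, i.e. |K(x) − K(y)| ≤ |K|_α ‖x − y‖^α for all x, y, where α ∈ (0,1] and |K|_α > 0 is its α-Hölder constant. Let X ⊆ ℝ^d be compact and let C(X) > 0 be a constant such that N(X, ‖·‖, ε) ≤ C(X)·ε^{−d} for all 0 < ε ≤ diam_{‖·‖}(X). For δ > 0 let 𝒦_δ := { K_δ(x − ·) : x ∈ X } with K_δ := δ^{−d} K(·/δ). Then for every δ > 0 with δ ≤ (|K|_α / ‖K‖_∞)^{1/α}·diam_{‖·‖}(X), every 0 < ε ≤ δ^{−d}‖K‖_∞, and every probability measure Q on ℝ^d: N(𝒦_δ, L₂(Q), ε) ≤ C(X)·( |K|_α / (δ^{α+d} ε) )^{d/α}. -/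
open MeasureTheory ENNReal

noncomputable section

/-- The `ε`-covering number of a set `X ⊆ ℝ^d` with respect to the norm `N`. -/
def covSetNum (d : ℕ) (N : (Fin d → ℝ) → ℝ) (X : Set (Fin d → ℝ)) (ε : ℝ) : ℝ≥0∞ :=
  sInf {m : ℝ≥0∞ | ∃ s : Finset (Fin d → ℝ), (s.card : ℝ≥0∞) = m ∧
    ∀ x ∈ X, ∃ y ∈ s, N (x - y) ≤ ε}

/-- The diameter of a set `X ⊆ ℝ^d` with respect to the norm `N`. -/
def diamN (d : ℕ) (N : (Fin d → ℝ) → ℝ) (X : Set (Fin d → ℝ)) : ℝ :=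
  sSup {r : ℝ | ∃ x ∈ X, ∃ y ∈ X, r = N (x - y)}

/-- Let `K` be a symmetric kernel that is `α`-Hölder continuous with
respect to a norm `‖·‖` on `ℝ^d`, with Hölder constant `|K|_α`, let `X ⊆ ℝ^d` be compact
and `C(X) > 0` with `N(X, ‖·‖, ε) ≤ C(X)·ε^{−d}` for all `0 < ε ≤ diam X`.  Then for all
`δ > 0` with `δ ≤ (|K|_α/‖K‖_∞)^{1/α}·diam X`, all `0 < ε ≤ δ^{−d}‖K‖_∞`, and every
probability measure `Q` on `ℝ^d`, the class `𝒦_δ := { K_δ(x−·) : x ∈ X }` satisfies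
`N(𝒦_δ, L₂(Q), ε) ≤ C(X)·(|K|_α/(δ^{α+d} ε))^{d/α}`. -/
theorem covNum_holder_kernel {d : ℕ} (hd : 0 < d)
    (N : (Fin d → ℝ) → ℝ) (hN : IsNormOn d N)
    (K : (Fin d → ℝ) → ℝ) (hK : IsSymmKernel d K)
    (α L : ℝ) (hα : 0 < α) (hα1 : α ≤ 1) (hL : 0 < L)
    (hHolder : ∀ x y, |K x - K y| ≤ L * N (x - y) ^ α)
    (X : Set (Fin d → ℝ)) (hX : IsCompact X)
    (C : ℝ) (hC : 0 < C)
    (hcov : ∀ ε : ℝ, 0 < ε → ε ≤ diamN d N X →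
      covSetNum d N X ε ≤ ENNReal.ofReal (C * ε ^ (-(d : ℝ))))
    (δ : ℝ) (hδ : 0 < δ)
    (hδle : δ ≤ (L / sSup (Set.range K)) ^ (1 / α) * diamN d N X)
    (ε : ℝ) (hε : 0 < ε) (hεle : ε ≤ (δ ^ d)⁻¹ * sSup (Set.range K))
    (Q : Measure (Fin d → ℝ)) [IsProbabilityMeasure Q] :
    covNum d Q {f | ∃ x ∈ X, f = fun y => (δ ^ d)⁻¹ * K (δ⁻¹ • (x - y))} ε ≤
      ENNReal.ofReal (C * (L / (δ ^ (α + (d : ℝ)) * ε)) ^ ((d : ℝ) / α)) := by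
  classical
  set S := sSup (Set.range K) with hSdef
  have hK0 : 0 < K 0 := hK.pos_near_zero.self_of_nhds
  have hSpos : 0 < S := lt_of_lt_of_le hK0 (le_csSup hK.bddAbove ⟨0, rfl⟩)
  have hNneg : ∀ x, N (-x) = N x := by
    intro x
    have := hN.smul (-1) x
    simpa using this
  have hNnonneg : ∀ x, 0 ≤ N x := by
    intro x
    have h1 := hN.triangle x (-x)
    have h0 : N (x + -x) = 0 := by
      rw [add_neg_cancel]; exact (hN.eq_zero_iff 0).mpr rfl
    have h2 := hNneg x
    linarith
  have hδdpos : (0:ℝ) < δ ^ d := pow_pos hδ d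
  set x0 : ℝ := ε * δ ^ (α + (d : ℝ)) / L with hx0def
  have hδad : (0:ℝ) < δ ^ (α + (d : ℝ)) := Real.rpow_pos_of_pos hδ _
  have hx0pos : 0 < x0 := by positivity
  set r : ℝ := x0 ^ (1 / α) with hrdef
  have hrpos : 0 < r := Real.rpow_pos_of_pos hx0pos _
  have hrα : r ^ α = x0 := by
    rw [hrdef, ← Real.rpow_mul hx0pos.le, one_div_mul_cancel hα.ne', Real.rpow_one]
  have hδsplit : δ ^ (α + (d:ℝ)) = δ ^ α * δ ^ d := by
    rw [Real.rpow_add hδ, Real.rpow_natCast]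
  -- diameter bound
  have hdiampos : 0 < diamN d N X := by
    by_contra h
    push_neg at h
    have : (L / S) ^ (1/α) * diamN d N X ≤ 0 :=
      mul_nonpos_of_nonneg_of_nonpos (Real.rpow_nonneg (by positivity) _) h
    linarith [hδle, hδ]
  have hrle : r ≤ diamN d N X := by
    have h1 : r ^ α ≤ diamN d N X ^ α := by
      rw [hrα]
      have hδα : δ ^ α ≤ (L / S) * diamN d N X ^ α := by
        calc δ ^ α ≤ ((L / S) ^ (1/α) * diamN d N X) ^ α :=
              Real.rpow_le_rpow hδ.le hδle hα.le
          _ = (L / S) * diamN d N X ^ α := by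
              rw [Real.mul_rpow (Real.rpow_nonneg (by positivity) _) hdiampos.le,
                ← Real.rpow_mul (by positivity), one_div_mul_cancel hα.ne', Real.rpow_one]
      have h2 : x0 ≤ ((δ ^ d)⁻¹ * S) * δ ^ (α + (d:ℝ)) / L := by
        rw [hx0def]
        gcongr
      calc x0 ≤ ((δ ^ d)⁻¹ * S) * δ ^ (α + (d:ℝ)) / L := h2
        _ = (S / L) * δ ^ α := by
            rw [hδsplit]; field_simp; try ring
        _ ≤ (S / L) * ((L / S) * diamN d N X ^ α) := by
            gcongr
        _ = diamN d N X ^ α := by field_simp; try ring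
    exact (Real.rpow_le_rpow_iff hrpos.le hdiampos.le hα).mp h1
  -- key L2 bound
  have key : ∀ x₀ y₀ : Fin d → ℝ, N (x₀ - y₀) ≤ r →
      (∫⁻ x, ENNReal.ofReal
        (((δ ^ d)⁻¹ * K (δ⁻¹ • (x₀ - x)) - (δ ^ d)⁻¹ * K (δ⁻¹ • (y₀ - x))) ^ 2) ∂Q)
        ≤ ENNReal.ofReal (ε ^ 2) := by
    intro x₀ y₀ hxy
    have hpt : ∀ x, ((δ ^ d)⁻¹ * K (δ⁻¹ • (x₀ - x)) - (δ ^ d)⁻¹ * K (δ⁻¹ • (y₀ - x))) ^ 2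
        ≤ ε ^ 2 := by
      intro x
      have heq : δ⁻¹ • (x₀ - x) - δ⁻¹ • (y₀ - x) = δ⁻¹ • (x₀ - y₀) := by
        rw [← smul_sub]
        congr 1
        abel
      have hdiff : |K (δ⁻¹ • (x₀ - x)) - K (δ⁻¹ • (y₀ - x))| ≤ L * (δ⁻¹ * N (x₀ - y₀)) ^ α := by
        have h := hHolder (δ⁻¹ • (x₀ - x)) (δ⁻¹ • (y₀ - x))
        rwa [heq, hN.smul, abs_of_pos (inv_pos.mpr hδ)] at h
      have h2 : L * (δ⁻¹ * N (x₀ - y₀)) ^ α ≤ ε * δ ^ d := by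
        have h3 : (δ⁻¹ * N (x₀ - y₀)) ^ α ≤ (δ⁻¹ * r) ^ α := by
          apply Real.rpow_le_rpow (mul_nonneg (by positivity) (hNnonneg _)) _ hα.le
          exact mul_le_mul_of_nonneg_left hxy (by positivity)
        have h4 : (δ⁻¹ * r) ^ α = δ⁻¹ ^ α * r ^ α :=
          Real.mul_rpow (by positivity) hrpos.le
        have h5 : L * (δ⁻¹ ^ α * x0) = ε * δ ^ d := by
          rw [hx0def, hδsplit, Real.inv_rpow hδ.le]
          field_simp; try ring
        calc L * (δ⁻¹ * N (x₀ - y₀)) ^ α ≤ L * (δ⁻¹ * r) ^ α := by gcongr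
          _ = L * (δ⁻¹ ^ α * r ^ α) := by rw [h4]
          _ = ε * δ ^ d := by rw [hrα]; exact h5
      have habs : |(δ ^ d)⁻¹ * K (δ⁻¹ • (x₀ - x)) - (δ ^ d)⁻¹ * K (δ⁻¹ • (y₀ - x))| ≤ ε := by
        have : (δ ^ d)⁻¹ * K (δ⁻¹ • (x₀ - x)) - (δ ^ d)⁻¹ * K (δ⁻¹ • (y₀ - x))
            = (δ ^ d)⁻¹ * (K (δ⁻¹ • (x₀ - x)) - K (δ⁻¹ • (y₀ - x))) := by ring
        rw [this, abs_mul, abs_of_pos (inv_pos.mpr hδdpos)]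
        calc (δ ^ d)⁻¹ * |K (δ⁻¹ • (x₀ - x)) - K (δ⁻¹ • (y₀ - x))|
            ≤ (δ ^ d)⁻¹ * (ε * δ ^ d) := by
              gcongr
              exact hdiff.trans h2
          _ = ε := by field_simp; try ring
      calc ((δ ^ d)⁻¹ * K (δ⁻¹ • (x₀ - x)) - (δ ^ d)⁻¹ * K (δ⁻¹ • (y₀ - x))) ^ 2
          = |(δ ^ d)⁻¹ * K (δ⁻¹ • (x₀ - x)) - (δ ^ d)⁻¹ * K (δ⁻¹ • (y₀ - x))| ^ 2 := by
            rw [sq_abs]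
        _ ≤ ε ^ 2 := by gcongr
    calc (∫⁻ x, ENNReal.ofReal
          (((δ ^ d)⁻¹ * K (δ⁻¹ • (x₀ - x)) - (δ ^ d)⁻¹ * K (δ⁻¹ • (y₀ - x))) ^ 2) ∂Q)
        ≤ ∫⁻ _, ENNReal.ofReal (ε ^ 2) ∂Q := by
          apply lintegral_mono
          intro x
          exact ENNReal.ofReal_le_ofReal (hpt x)
      _ = ENNReal.ofReal (ε ^ 2) := by
          rw [lintegral_const, measure_univ, mul_one]
  -- covNum ≤ covSetNum r
  have hstep : covNum d Q {f | ∃ x ∈ X, f = fun y => (δ ^ d)⁻¹ * K (δ⁻¹ • (x - y))} ε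
      ≤ covSetNum d N X r := by
    apply le_sInf
    rintro m ⟨s, hcard, hs⟩
    set F : (Fin d → ℝ) → ((Fin d → ℝ) → ℝ) :=
      fun y₀ => fun y => (δ ^ d)⁻¹ * K (δ⁻¹ • (y₀ - y)) with hF
    have hmem : ((s.image F).card : ℝ≥0∞) ∈
        {m : ℝ≥0∞ | ∃ t : Finset ((Fin d → ℝ) → ℝ), (t.card : ℝ≥0∞) = m ∧
          ∀ g ∈ {f | ∃ x ∈ X, f = fun y => (δ ^ d)⁻¹ * K (δ⁻¹ • (x - y))}, ∃ f ∈ t,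
            (∫⁻ x, ENNReal.ofReal ((g x - f x) ^ 2) ∂Q) ≤ ENNReal.ofReal (ε ^ 2)} := by
      refine ⟨s.image F, rfl, ?_⟩
      rintro g ⟨x₀, hx₀X, rfl⟩
      obtain ⟨y₀, hy₀s, hy₀⟩ := hs x₀ hx₀X
      exact ⟨F y₀, Finset.mem_image_of_mem F hy₀s, key x₀ y₀ hy₀⟩
    calc covNum d Q {f | ∃ x ∈ X, f = fun y => (δ ^ d)⁻¹ * K (δ⁻¹ • (x - y))} ε
        ≤ ((s.image F).card : ℝ≥0∞) := sInf_le hmem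
      _ ≤ (s.card : ℝ≥0∞) := by exact_mod_cast Finset.card_image_le
      _ = m := hcard
  refine hstep.trans ((hcov r hrpos hrle).trans ?_)
  apply ENNReal.ofReal_le_ofReal
  have hfin : r ^ (-(d:ℝ)) = (L / (δ ^ (α + (d : ℝ)) * ε)) ^ ((d : ℝ) / α) := by
    have hinv : L / (δ ^ (α + (d : ℝ)) * ε) = x0⁻¹ := by
      rw [hx0def, inv_div, mul_comm]
    rw [hinv, hrdef, ← Real.rpow_mul hx0pos.le, Real.inv_rpow hx0pos.le,
      ← Real.rpow_neg hx0pos.le]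
    congr 1
    field_simp; try ring
  rw [hfin]
end
end

section
/- Let P be a λ^d-absolutely continuous probability measure on ℝ^d, ρ ≥ 0, and let h be any λ^d-density of P. Then: (i) λ^d({h ≥ ρ} ∖ M_ρ) = 0; and (ii) if P is normal at level ρ, then also λ^d(M_ρ ∖ {h ≥ ρ}) = 0, and consequently λ^d(M_ρ △ {h ≥ ρ}) = 0, where △ denotes the symmetric difference. -/
open MeasureTheory ENNReal

noncomputable section

lemma density_ae_eq {d : ℕ} {P : Measure (Fin d → ℝ)} {h g : (Fin d → ℝ) → ℝ}
    (hh : IsDensityOf d P h) (hg : IsDensityOf d P g) : h =ᵐ[volume] g := by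
  have := (withDensity_eq_iff_of_sigmaFinite
    (f := fun x => ENNReal.ofReal (h x)) (g := fun x => ENNReal.ofReal (g x))
    (hh.1.ennreal_ofReal.aemeasurable) (hg.1.ennreal_ofReal.aemeasurable)).mp
    (hh.2.2 ▸ hg.2.2)
  filter_upwards [this] with x hx
  exact (ENNReal.ofReal_eq_ofReal_iff (hh.2.1 x) (hg.2.1 x)).mp hx

/-- Let `P` be a Lebesgue-absolutely continuous probability measure on
`ℝ^d`, `ρ ≥ 0`, and `h` any Lebesgue density of `P`.  Then (i) `λ^d({h ≥ ρ} ∖ M_ρ) = 0`;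
and (ii) if `P` is normal at level `ρ`, then also `λ^d(M_ρ ∖ {h ≥ ρ}) = 0`, and
consequently `λ^d(M_ρ △ {h ≥ ρ}) = 0`. -/
theorem level_set_Mset_null_differences {d : ℕ}
    (P : Measure (Fin d → ℝ)) [IsProbabilityMeasure P]
    (h : (Fin d → ℝ) → ℝ) (hdens : IsDensityOf d P h)
    (ρ : ℝ) (hρ : 0 ≤ ρ) :
    volume ({x | ρ ≤ h x} \ Mset d h ρ) = 0 ∧
    (NormalAtLevel d P h ρ →
      volume (Mset d h ρ \ {x | ρ ≤ h x}) = 0 ∧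
      volume (symmDiff (Mset d h ρ) {x | ρ ≤ h x}) = 0) := by
  have part1 : volume ({x | ρ ≤ h x} \ Mset d h ρ) = 0 := by
    apply measure_null_of_locally_null
    intro x hx
    obtain ⟨hxh, hxM⟩ := hx
    simp only [Mset, Set.mem_setOf_eq, not_forall, not_lt, nonpos_iff_eq_zero] at hxM
    obtain ⟨U, hU, hxU, hvol⟩ := hxM
    refine ⟨U ∩ {y | ρ ≤ h y}, ?_, hvol⟩
    refine Filter.mem_of_superset
      (Filter.inter_mem (nhdsWithin_le_nhds (hU.mem_nhds hxU)) self_mem_nhdsWithin) ?_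
    intro y hy
    exact ⟨hy.1, hy.2.1⟩
  refine ⟨part1, fun hN => ?_⟩
  obtain ⟨h₁, h₂, hd1, _, hM1, _⟩ := hN
  have hae : h =ᵐ[volume] h₁ := density_ae_eq hdens hd1
  have key : volume (Mset d h ρ \ {x | ρ ≤ h x}) = 0 := by
    have hsub : Mset d h ρ \ {x | ρ ≤ h x} ⊆
        (Mset d h ρ \ {x | ρ ≤ h₁ x}) ∪ {x | ¬ h x = h₁ x} := by
      intro x hx
      by_cases hxe : h x = h₁ x
      · exact Or.inl ⟨hx.1, fun hc => hx.2 (by rw [Set.mem_setOf_eq, hxe]; exact hc)⟩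
      · exact Or.inr hxe
    exact measure_mono_null hsub (measure_union_null hM1 (ae_iff.mp hae))
  refine ⟨key, ?_⟩
  rw [Set.symmDiff_def]
  exact measure_union_null key part1
end
end
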